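/- For every weak composition a of length n, the key polynomial equals the weight generating polynomial of semistandard key tableaux: Σ_{T∈SKT(a)} 𝔉_{des(T)}(x_1,…,x_n) = Σ_{T∈SSKT(a)} x_1^{wt(T)_1}⋯x_n^{wt(T)_n}. -/

import Mathlib

open scoped Classical
open Finset

namespace NSMac

noncomputable section

/-- `NN n a` is the total size `a 1 + ⋯ + a n` of the weak composition `a` of length `n`. -/
def NN (n : ℕ) (a : ℕ → ℕ) : ℕ := ∑ i ∈ Finset.Icc 1 n, a i

/-- The key diagram of a weak composition `a` of length `n`: cells `(i, j)` (row `i`,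
column `j`, both 1-based, rows indexed bottom to top) with `1 ≤ i ≤ n`, `1 ≤ j ≤ a i`. -/
def keyDiagram (n : ℕ) (a : ℕ → ℕ) : Finset (ℕ × ℕ) :=
  (Finset.Icc 1 n ×ˢ Finset.Icc 1 (NN n a)).filter (fun c => c.2 ≤ a c.1)

/-- A standard filling: a bijection from the diagram onto `{1, …, N}`. -/
def IsStandardFilling (n : ℕ) (a : ℕ → ℕ) (T : ℕ × ℕ → ℕ) : Prop :=
  Set.BijOn T (keyDiagram n a : Set (ℕ × ℕ)) (Set.Icc 1 (NN n a))

/-- Key tableau: positive entries, distinct within each column, rows weakly decreasing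
left to right, and the key condition on column pairs. -/
def IsKeyTableau (n : ℕ) (a : ℕ → ℕ) (T : ℕ × ℕ → ℕ) : Prop :=
  (∀ c ∈ keyDiagram n a, 1 ≤ T c) ∧
  (∀ c ∈ keyDiagram n a, ∀ d ∈ keyDiagram n a, c.2 = d.2 → c ≠ d → T c ≠ T d) ∧
  (∀ r c : ℕ, (r, c) ∈ keyDiagram n a → (r, c + 1) ∈ keyDiagram n a →
    T (r, c + 1) ≤ T (r, c)) ∧
  (∀ r r' c : ℕ, (r, c) ∈ keyDiagram n a → (r', c) ∈ keyDiagram n a → r' < r →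
    T (r, c) < T (r', c) →
    (r', c + 1) ∈ keyDiagram n a ∧ T (r, c) < T (r', c + 1))

/-- Every entry is at most its row index. -/
def RowBounded (n : ℕ) (a : ℕ → ℕ) (T : ℕ × ℕ → ℕ) : Prop :=
  ∀ c ∈ keyDiagram n a, T c ≤ c.1

/-- The finset of fillings of the key diagram with entries in `{1, …, B}`, encoded as
finitely supported functions vanishing off the diagram. -/
def Fillings (n : ℕ) (a : ℕ → ℕ) (B : ℕ) : Finset ((ℕ × ℕ) →₀ ℕ) :=
  (keyDiagram n a).finsupp (fun _ => Finset.Icc 1 B)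

/-- Standard key tableaux `SKT(a)`. -/
def SKTset (n : ℕ) (a : ℕ → ℕ) : Finset ((ℕ × ℕ) →₀ ℕ) :=
  (Fillings n a (NN n a)).filter fun T => IsStandardFilling n a ⇑T ∧ IsKeyTableau n a ⇑T

/-- Semistandard key tableaux `SSKT(a)`. -/
def SSKTset (n : ℕ) (a : ℕ → ℕ) : Finset ((ℕ × ℕ) →₀ ℕ) :=
  (Fillings n a n).filter fun T => IsKeyTableau n a ⇑T ∧ RowBounded n a ⇑T

/-- The leg of a cell of a key diagram. -/
def leg (a : ℕ → ℕ) (c : ℕ × ℕ) : ℕ := a c.1 + 1 - c.2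

/-- `maj`: the sum of legs of cells whose entry strictly exceeds the entry to its left. -/
def maj (n : ℕ) (a : ℕ → ℕ) (T : ℕ × ℕ → ℕ) : ℕ :=
  ∑ c ∈ (keyDiagram n a).filter (fun c => 2 ≤ c.2 ∧ T (c.1, c.2 - 1) < T c), leg a c

/-- Counterclockwise cyclic orientation of a triple of entries. -/
def cyc3 (u v w : ℕ) : Prop := (u < v ∧ v < w) ∨ (v < w ∧ w < u) ∨ (w < u ∧ u < v)

/-- A Type I co-inversion triple, encoded by the pair of cells `p.1 = (r, c)` and
`p.2 = (r', c)` with `r < r'`, `a r' < a r`; the third cell is `(r, c+1)`. -/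
def IsCoinvI (n : ℕ) (a : ℕ → ℕ) (T : ℕ × ℕ → ℕ) (p : (ℕ × ℕ) × (ℕ × ℕ)) : Prop :=
  p.1.2 = p.2.2 ∧ p.1.1 < p.2.1 ∧ a p.2.1 < a p.1.1 ∧
  (p.1.1, p.1.2 + 1) ∈ keyDiagram n a ∧
  cyc3 (T p.2) (T p.1) (T (p.1.1, p.1.2 + 1))

/-- A Type II co-inversion triple, encoded by the pair of cells `p.1 = (r, c)` and
`p.2 = (r'', c+1)` with `r'' < r`, `a r'' ≤ a r`; the third cell is `(r, c+1)`. -/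
def IsCoinvII (n : ℕ) (a : ℕ → ℕ) (T : ℕ × ℕ → ℕ) (p : (ℕ × ℕ) × (ℕ × ℕ)) : Prop :=
  p.2.2 = p.1.2 + 1 ∧ p.2.1 < p.1.1 ∧ a p.2.1 ≤ a p.1.1 ∧
  (p.1.1, p.1.2 + 1) ∈ keyDiagram n a ∧
  cyc3 (T p.1) (T (p.1.1, p.1.2 + 1)) (T p.2)

/-- `coinv`: the number of co-inversion triples. -/
def coinv (n : ℕ) (a : ℕ → ℕ) (T : ℕ × ℕ → ℕ) : ℕ :=
  (((keyDiagram n a) ×ˢ (keyDiagram n a)).filter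
    (fun p => IsCoinvI n a T p ∨ IsCoinvII n a T p)).card

/-- Two cells attack each other: same column, or adjacent columns with the left cell
strictly higher. -/
def Attacks (c d : ℕ × ℕ) : Prop :=
  (c.2 = d.2 ∧ c ≠ d) ∨ (d.2 = c.2 + 1 ∧ d.1 < c.1) ∨ (c.2 = d.2 + 1 ∧ c.1 < d.1)

/-- Non-attacking filling: attacking cells get distinct entries and first-column entries
are at most their row index. -/
def IsNonAttacking (n : ℕ) (a : ℕ → ℕ) (T : ℕ × ℕ → ℕ) : Prop :=
  (∀ c ∈ keyDiagram n a, ∀ d ∈ keyDiagram n a, Attacks c d → T c ≠ T d) ∧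
  (∀ r : ℕ, (r, 1) ∈ keyDiagram n a → T (r, 1) ≤ r)

/-- Semistandard key tabloids `SSKD(a)`. -/
def SSKDset (n : ℕ) (a : ℕ → ℕ) : Finset ((ℕ × ℕ) →₀ ℕ) :=
  (Fillings n a n).filter fun T => IsNonAttacking n a ⇑T ∧ coinv n a ⇑T = 0

/-- Standard key tabloids `SKD(a)`. -/
def SKDset (n : ℕ) (a : ℕ → ℕ) : Finset ((ℕ × ℕ) →₀ ℕ) :=
  (Fillings n a (NN n a)).filter fun T => IsStandardFilling n a ⇑T ∧ coinv n a ⇑T = 0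

/-- The weight of a filling, as a finitely supported exponent vector. -/
def wtF (n : ℕ) (a : ℕ → ℕ) (T : ℕ × ℕ → ℕ) : ℕ →₀ ℕ :=
  ∑ c ∈ keyDiagram n a, Finsupp.single (T c) 1

/-- The row of the cell containing entry `i` (of a standard filling). -/
def rowOf (n : ℕ) (a : ℕ → ℕ) (T : ℕ × ℕ → ℕ) (i : ℕ) : ℕ :=
  ((keyDiagram n a).filter (fun c => T c = i)).sup (fun c => c.1)

/-- The column of the cell containing entry `i` (of a standard filling). -/
def colOf (n : ℕ) (a : ℕ → ℕ) (T : ℕ × ℕ → ℕ) (i : ℕ) : ℕ :=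
  ((keyDiagram n a).filter (fun c => T c = i)).sup (fun c => c.2)

/-- `tvalAux n a T m` is the `t`-value of the block (for the weak descent composition)
containing the entry `N - m`, computed by downward recursion from entry `N`. -/
def tvalAux (n : ℕ) (a : ℕ → ℕ) (T : ℕ × ℕ → ℕ) : ℕ → ℤ
  | 0 => if colOf n a T (NN n a) = 1 then (rowOf n a T (NN n a) : ℤ) else (n : ℤ)
  | m + 1 =>
    let i := NN n a - (m + 1)
    let prev := tvalAux n a T m
    if colOf n a T i ≤ colOf n a T (i + 1) then
      if colOf n a T i = 1 then min (rowOf n a T i : ℤ) (prev - 1) else prev - 1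
    else prev

/-- The `t`-value assigned to entry `i` of a standard filling. -/
def tval (n : ℕ) (a : ℕ → ℕ) (T : ℕ × ℕ → ℕ) (i : ℕ) : ℤ := tvalAux n a T (NN n a - i)

/-- The weak descent composition of a standard filling: `none` when the filling is
virtual, otherwise the weak composition of length `n` recording block sizes at rows. -/
def desOpt (n : ℕ) (a : ℕ → ℕ) (T : ℕ × ℕ → ℕ) : Option (ℕ → ℕ) :=
  if ∀ i ∈ Finset.Icc 1 (NN n a), 1 ≤ tval n a T i then
    some (fun r => ((Finset.Icc 1 (NN n a)).filter (fun i => tval n a T i = (r : ℤ))).card)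
  else none

/-- `flat n a`: the strong composition obtained from `(a 1, …, a n)` by deleting zeros. -/
def flat (n : ℕ) (a : ℕ → ℕ) : List ℕ :=
  ((List.range n).map (fun i => a (i + 1))).filter (fun x => x ≠ 0)

/-- `Refines β α`: `β` is obtained by splitting the parts of `α` into consecutive
(nonempty) chunks. -/
def Refines (β α : List ℕ) : Prop :=
  ∃ L : List (List ℕ), L.flatten = β ∧ L.map List.sum = α ∧ [] ∉ L

/-- `Dominates n b a`: `b ≥ a` in prefix-sum order, i.e. `b₁ + ⋯ + b_k ≥ a₁ + ⋯ + a_k`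
for all `k = 1, …, n`. -/
def Dominates (n : ℕ) (b a : ℕ → ℕ) : Prop :=
  ∀ k, 1 ≤ k → k ≤ n → ∑ i ∈ Finset.Icc 1 k, a i ≤ ∑ i ∈ Finset.Icc 1 k, b i

/-- The fundamental slide polynomial `𝔉_a(x₁, …, x_n)`, with coefficients in `ℤ[q]`. -/
def Slide (n : ℕ) (a : ℕ → ℕ) : MvPolynomial ℕ (Polynomial ℤ) :=
  ∑ b ∈ ((Finset.Icc 1 n).finsuppAntidiag (NN n a)).filter
      (fun b : ℕ →₀ ℕ => Dominates n ⇑b a ∧ Refines (flat n ⇑b) (flat n a)),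
    MvPolynomial.monomial b 1

/-- `𝔉` extended by `𝔉_∅ = 0`. -/
def SlideOpt (n : ℕ) : Option (ℕ → ℕ) → MvPolynomial ℕ (Polynomial ℤ)
  | none => 0
  | some b => Slide n b

/-- The key polynomial (type A Demazure character) `κ_a = Σ_{T ∈ SKT(a)} 𝔉_{des T}`. -/
def kappa (n : ℕ) (a : ℕ → ℕ) : MvPolynomial ℕ (Polynomial ℤ) :=
  ∑ T ∈ SKTset n a, SlideOpt n (desOpt n a ⇑T)

/-- The specialized nonsymmetric Macdonald polynomial
`E_a(X; q, 0) = Σ_{T ∈ SSKD(a)} q^{maj T} x^{wt T}` in `ℤ[q][x]`. -/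
def Epoly (n : ℕ) (a : ℕ → ℕ) : MvPolynomial ℕ (Polynomial ℤ) :=
  ∑ T ∈ SSKDset n a, MvPolynomial.monomial (wtF n a ⇑T) (Polynomial.X ^ maj n a ⇑T)

/-- Standardization: the new label of cell `c` is the number of cells `d` whose entry is
smaller, or equal with `d` weakly to the right (so equal entries are relabeled right to
left, processing entry values in increasing order). -/
def stdize (n : ℕ) (a : ℕ → ℕ) (T : ℕ × ℕ → ℕ) : ℕ × ℕ → ℕ := fun c =>
  ((keyDiagram n a).filter (fun d => T d < T c ∨ (T d = T c ∧ c.2 ≤ d.2))).card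

/-- Standardization, packaged as a finitely supported filling. -/
def stdF (n : ℕ) (a : ℕ → ℕ) (T : ℕ × ℕ → ℕ) : (ℕ × ℕ) →₀ ℕ :=
  ∑ c ∈ keyDiagram n a, Finsupp.single c (stdize n a T c)

/-- Column reading order: columns left to right, each column bottom to top. -/
def colLt (c d : ℕ × ℕ) : Prop := c.2 < d.2 ∨ (c.2 = d.2 ∧ c.1 < d.1)

/-- The cell of a standard filling containing entry `i`. -/
def cellOf (n : ℕ) (a : ℕ → ℕ) (T : ℕ × ℕ → ℕ) (i : ℕ) : ℕ × ℕ :=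
  (rowOf n a T i, colOf n a T i)

/-- Exchange the values `u` and `v`. -/
def swapVals (u v : ℕ) : ℕ → ℕ := fun m => if m = u then v else if m = v then u else m

/-- The cyclic relabeling `i-1 ↦ i ↦ i+1 ↦ i-1` of values. -/
def rho1 (i : ℕ) : ℕ → ℕ := fun m =>
  if m = i - 1 then i else if m = i then i + 1 else if m = i + 1 then i - 1 else m

/-- The cyclic relabeling `i-1 ↦ i+1 ↦ i ↦ i-1` of values. -/
def rho2 (i : ℕ) : ℕ → ℕ := fun m =>
  if m = i - 1 then i + 1 else if m = i then i - 1 else if m = i + 1 then i else m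

/-- The weak dual equivalence involution `ψ_i` on standard fillings. Letting `b, c, d` be
the cells of `i-1, i, i+1` in column reading order: `ψ_i(T) = T` if `c` contains `i`;
else `𝔟_i(T)` if `b, d` are attacking or row-adjacent (the nontrivial cycling of
`i-1, i, i+1` for which `c` does not receive `i`); else exchange `i-1, i` if `c`
contains `i+1`, and exchange `i, i+1` if `c` contains `i-1`. -/
def psi (n : ℕ) (a : ℕ → ℕ) (i : ℕ) (T : ℕ × ℕ → ℕ) : ℕ × ℕ → ℕ :=
  let x := cellOf n a T (i - 1)
  let y := cellOf n a T i
  let z := cellOf n a T (i + 1)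
  if (colLt x y ∧ colLt y z) ∨ (colLt z y ∧ colLt y x) then T
  else
    let xIsMid : Prop := (colLt y x ∧ colLt x z) ∨ (colLt z x ∧ colLt x y)
    let other : ℕ × ℕ := if xIsMid then z else x
    if Attacks y other ∨ (y.1 = other.1 ∧ (y.2 = other.2 + 1 ∨ other.2 = y.2 + 1)) then
      if xIsMid then rho2 i ∘ T else rho1 i ∘ T
    else if xIsMid then swapVals i (i + 1) ∘ T
    else swapVals (i - 1) i ∘ T

/-- `ψ`-relatedness on standard key tabloids: some `ψ_i` with `1 < i < N` maps one to
the other. -/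
def psiRel (n : ℕ) (a : ℕ → ℕ) (S T : (ℕ × ℕ) →₀ ℕ) : Prop :=
  S ∈ SKDset n a ∧ T ∈ SKDset n a ∧
    ∃ i, 1 < i ∧ i < NN n a ∧ psi n a i ⇑S = ⇑T

/-- `μ` (given by parts `μ 1 ≥ ⋯ ≥ μ ℓ > 0`) is a partition with `ℓ` parts. -/
def IsPartition (ℓ : ℕ) (μ : ℕ → ℕ) : Prop :=
  (∀ i, 1 ≤ i → i ≤ ℓ → 1 ≤ μ i) ∧ (∀ i j, 1 ≤ i → i ≤ j → j ≤ ℓ → μ j ≤ μ i)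

/-- The leg of a cell of a Young diagram: the number of cells weakly above it in its
column. -/
def legY (ℓ : ℕ) (μ : ℕ → ℕ) (c : ℕ × ℕ) : ℕ :=
  ((Finset.Icc c.1 ℓ).filter (fun i => c.2 ≤ μ i)).card

/-- `comaj` of a filling of a Young diagram. -/
def comajY (ℓ : ℕ) (μ : ℕ → ℕ) (T : ℕ × ℕ → ℕ) : ℕ :=
  ∑ c ∈ (keyDiagram ℓ μ).filter (fun c => 2 ≤ c.1 ∧ T c ≤ T (c.1 - 1, c.2)), legY ℓ μ c

/-- An inversion triple of a Young diagram, encoded by the pair of cells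
`p.1 = (r, c)`, `p.2 = (r, c')` with `c < c'`; for `r > 1` the third cell is `(r-1, c)`. -/
def IsInvPair (ℓ : ℕ) (μ : ℕ → ℕ) (T : ℕ × ℕ → ℕ) (p : (ℕ × ℕ) × (ℕ × ℕ)) : Prop :=
  p.1.1 = p.2.1 ∧ p.1.2 < p.2.2 ∧
  (if p.1.1 = 1 then T p.2 < T p.1
   else cyc3 (T p.2) (T p.1) (T (p.1.1 - 1, p.1.2)))

/-- `inv` of a filling of a Young diagram. -/
def invY (ℓ : ℕ) (μ : ℕ → ℕ) (T : ℕ × ℕ → ℕ) : ℕ :=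
  (((keyDiagram ℓ μ) ×ˢ (keyDiagram ℓ μ)).filter (fun p => IsInvPair ℓ μ T p)).card

/-- Standard Young tableau: standard filling with rows increasing left to right and
columns increasing bottom to top. -/
def IsSYT (ℓ : ℕ) (μ : ℕ → ℕ) (T : ℕ × ℕ → ℕ) : Prop :=
  IsStandardFilling ℓ μ T ∧
  (∀ r c : ℕ, (r, c) ∈ keyDiagram ℓ μ → (r, c + 1) ∈ keyDiagram ℓ μ →
    T (r, c) < T (r, c + 1)) ∧
  (∀ r c : ℕ, (r, c) ∈ keyDiagram ℓ μ → (r + 1, c) ∈ keyDiagram ℓ μ →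
    T (r, c) < T (r + 1, c))

/-- Standard Young tabloids `SYD(μ)`. -/
def SYDset (ℓ : ℕ) (μ : ℕ → ℕ) : Finset ((ℕ × ℕ) →₀ ℕ) :=
  (Fillings ℓ μ (NN ℓ μ)).filter fun T => IsStandardFilling ℓ μ ⇑T ∧ invY ℓ μ ⇑T = 0

/-- The length of column `j` of the key diagram of `a`. -/
def lam (n : ℕ) (a : ℕ → ℕ) (j : ℕ) : ℕ :=
  ((Finset.Icc 1 n).filter (fun i => j ≤ a i)).card

/-- The weak composition `0^m × a`. -/
def shiftComp (m : ℕ) (a : ℕ → ℕ) : ℕ → ℕ := fun i => if i ≤ m then 0 else a (i - m)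

/-- The shift of a filling: move row `i` to row `i + m`. -/
def shiftF (n : ℕ) (a : ℕ → ℕ) (m : ℕ) (T : ℕ × ℕ → ℕ) : (ℕ × ℕ) →₀ ℕ :=
  ∑ c ∈ keyDiagram n a, Finsupp.single (c.1 + m, c.2) (T c)

end

end NSMac

namespace NSMac
noncomputable section
open Finset

/-! ### Generic helpers -/

lemma sum_single_apply {γ M : Type*} [AddCommMonoid M] (s : Finset γ) (g : γ → M) (x : γ) :
    (∑ c ∈ s, Finsupp.single c (g c)) x = if x ∈ s then g x else 0 := by
  classical
  rw [Finsupp.finset_sum_apply]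
  rw [show (∑ c ∈ s, (Finsupp.single c (g c)) x) = ∑ c ∈ s, if c = x then g c else 0 from
    Finset.sum_congr rfl fun c _ => by rw [Finsupp.single_apply]]
  exact Finset.sum_ite_eq' s x g

/-- monotone counting, part (a) -/
lemma le_card_count {N k j : ℕ} (f : ℕ → ℕ)
    (hmono : ∀ ⦃i i'⦄, 1 ≤ i → i ≤ i' → i' ≤ N → f i ≤ f i')
    (hj1 : 1 ≤ j) (hjN : j ≤ N) (hfj : f j ≤ k) :
    j ≤ ((Finset.Icc 1 N).filter (fun i => f i ≤ k)).card := by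
  have hsub : Finset.Icc 1 j ⊆ (Finset.Icc 1 N).filter (fun i => f i ≤ k) := by
    intro i hi
    rw [Finset.mem_Icc] at hi
    rw [Finset.mem_filter, Finset.mem_Icc]
    exact ⟨⟨hi.1, le_trans hi.2 hjN⟩, le_trans (hmono hi.1 hi.2 hjN) hfj⟩
  calc j = (Finset.Icc 1 j).card := by rw [Nat.card_Icc]; omega
    _ ≤ _ := Finset.card_le_card hsub

/-- monotone counting, part (b) -/
lemma count_le {N k j : ℕ} (f : ℕ → ℕ)
    (hmono : ∀ ⦃i i'⦄, 1 ≤ i → i ≤ i' → i' ≤ N → f i ≤ f i')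
    (hj1 : 1 ≤ j) (hjN : j ≤ N)
    (h : j ≤ ((Finset.Icc 1 N).filter (fun i => f i ≤ k)).card) : f j ≤ k := by
  by_contra h'
  push_neg at h'
  have hsub : (Finset.Icc 1 N).filter (fun i => f i ≤ k) ⊆ Finset.Icc 1 (j - 1) := by
    intro i hi
    rw [Finset.mem_filter, Finset.mem_Icc] at hi
    rw [Finset.mem_Icc]
    refine ⟨hi.1.1, ?_⟩
    by_contra hij
    push_neg at hij
    have : j ≤ i := by omega
    exact absurd (le_trans (hmono hj1 this hi.1.2) hi.2) (by omega)
  have := Finset.card_le_card hsub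
  rw [Nat.card_Icc] at this
  omega

/-! ### Diagram lemmas -/

lemma a_le_NN {n : ℕ} {a : ℕ → ℕ} {i : ℕ} (h1 : 1 ≤ i) (h2 : i ≤ n) : a i ≤ NN n a :=
  Finset.single_le_sum (f := a) (fun _ _ => Nat.zero_le _) (Finset.mem_Icc.mpr ⟨h1, h2⟩)

lemma mem_keyDiagram {n : ℕ} {a : ℕ → ℕ} {c : ℕ × ℕ} :
    c ∈ keyDiagram n a ↔ 1 ≤ c.1 ∧ c.1 ≤ n ∧ 1 ≤ c.2 ∧ c.2 ≤ a c.1 := by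
  unfold keyDiagram
  rw [Finset.mem_filter, Finset.mem_product, Finset.mem_Icc, Finset.mem_Icc]
  constructor
  · rintro ⟨⟨⟨h1, h2⟩, h3, _⟩, h5⟩; exact ⟨h1, h2, h3, h5⟩
  · rintro ⟨h1, h2, h3, h5⟩
    exact ⟨⟨⟨h1, h2⟩, h3, le_trans h5 (a_le_NN h1 h2)⟩, h5⟩

lemma keyDiagram_left {n : ℕ} {a : ℕ → ℕ} {r c : ℕ} (h : (r, c + 1) ∈ keyDiagram n a)
    (hc : 1 ≤ c) : (r, c) ∈ keyDiagram n a := by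
  rw [mem_keyDiagram] at h ⊢
  obtain ⟨h1, h2, h3, h4⟩ := h
  have h4' : c + 1 ≤ a r := h4
  exact ⟨h1, h2, hc, show c ≤ a r by omega⟩

lemma card_keyDiagram (n : ℕ) (a : ℕ → ℕ) : (keyDiagram n a).card = NN n a := by
  rw [Finset.card_eq_sum_card_fiberwise (f := Prod.fst) (t := Finset.Icc 1 n)
    (fun c hc => Finset.mem_Icc.mpr ⟨(mem_keyDiagram.mp hc).1, (mem_keyDiagram.mp hc).2.1⟩)]
  unfold NN
  refine Finset.sum_congr rfl fun i hi => ?_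
  rw [Finset.mem_Icc] at hi
  have hcard : (Finset.Icc 1 (a i)).card = a i := by rw [Nat.card_Icc]; omega
  rw [← hcard]
  apply Finset.card_nbij (i := Prod.snd)
  · intro c hc
    rw [Finset.mem_coe, Finset.mem_filter] at hc
    have := mem_keyDiagram.mp hc.1
    rw [Finset.mem_coe, Finset.mem_Icc]
    exact ⟨this.2.2.1, hc.2 ▸ this.2.2.2⟩
  · intro c hc d hd hcd
    simp only [Finset.coe_filter, Set.mem_setOf_eq] at hc hd
    exact Prod.ext (hc.2.trans hd.2.symm) hcd
  · intro j hj
    simp only [Finset.coe_filter, Set.mem_setOf_eq, Set.mem_image]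
    rw [Finset.mem_coe, Finset.mem_Icc] at hj
    exact ⟨(i, j), ⟨mem_keyDiagram.mpr ⟨hi.1, hi.2, hj.1, hj.2⟩, rfl⟩, rfl⟩

/-! ### Cells of standard fillings -/

lemma cell_filter_eq {n : ℕ} {a : ℕ → ℕ} {S : ℕ × ℕ → ℕ} (hS : IsStandardFilling n a S)
    {i : ℕ} (h1 : 1 ≤ i) (h2 : i ≤ NN n a) :
    ∃ c ∈ keyDiagram n a, S c = i ∧
      (keyDiagram n a).filter (fun d => S d = i) = {c} := by
  obtain ⟨c, hc, hci⟩ := hS.2.2 (Set.mem_Icc.mpr ⟨h1, h2⟩)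
  refine ⟨c, hc, hci, ?_⟩
  ext d
  rw [Finset.mem_filter, Finset.mem_singleton]
  constructor
  · rintro ⟨hd, hdi⟩
    exact hS.2.1 hd hc (hdi.trans hci.symm)
  · rintro rfl
    exact ⟨hc, hci⟩

lemma cellOf_spec {n : ℕ} {a : ℕ → ℕ} {S : ℕ × ℕ → ℕ} (hS : IsStandardFilling n a S)
    {i : ℕ} (h1 : 1 ≤ i) (h2 : i ≤ NN n a) :
    cellOf n a S i ∈ keyDiagram n a ∧ S (cellOf n a S i) = i := by
  obtain ⟨c, hc, hci, hfil⟩ := cell_filter_eq hS h1 h2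
  have hrow : rowOf n a S i = c.1 := by unfold rowOf; rw [hfil, Finset.sup_singleton]
  have hcol : colOf n a S i = c.2 := by unfold colOf; rw [hfil, Finset.sup_singleton]
  have : cellOf n a S i = c := by unfold cellOf; rw [hrow, hcol]
  rw [this]; exact ⟨hc, hci⟩

lemma cellOf_unique {n : ℕ} {a : ℕ → ℕ} {S : ℕ × ℕ → ℕ} (hS : IsStandardFilling n a S)
    {i : ℕ} {c : ℕ × ℕ} (hc : c ∈ keyDiagram n a) (hci : S c = i) :
    c = cellOf n a S i := by
  have h1 : 1 ≤ i := by
    have := hS.1 hc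
    rw [Set.mem_Icc] at this
    omega
  have h2 : i ≤ NN n a := by
    have := hS.1 hc
    rw [Set.mem_Icc] at this
    rw [← hci]; exact this.2
  obtain ⟨hd, hdi⟩ := cellOf_spec hS h1 h2
  rw [← hci] at h2 h1
  exact hS.2.1 hc hd (by rw [hci, hdi])

/-! ### The standardization order -/

/-- Auxiliary: the strict "standardization" order attached to a filling. -/
def keyLt (T : ℕ × ℕ → ℕ) (c d : ℕ × ℕ) : Prop :=
  T c < T d ∨ (T c = T d ∧ d.2 < c.2)

lemma keyLt_trans {T : ℕ × ℕ → ℕ} {c d e : ℕ × ℕ} (h1 : keyLt T c d) (h2 : keyLt T d e) :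
    keyLt T c e := by
  unfold keyLt at *
  rcases h1 with h1 | ⟨h1, h1'⟩ <;> rcases h2 with h2 | ⟨h2, h2'⟩
  · exact Or.inl (h1.trans h2)
  · exact Or.inl (h2 ▸ h1)
  · exact Or.inl (h1 ▸ h2)
  · exact Or.inr ⟨h1.trans h2, h2'.trans h1'⟩

lemma keyLt_asymm {T : ℕ × ℕ → ℕ} {c d : ℕ × ℕ} (h1 : keyLt T c d) : ¬ keyLt T d c := by
  unfold keyLt at *
  rintro (h2 | ⟨h2, h2'⟩) <;> rcases h1 with h1 | ⟨h1, h1'⟩ <;> omega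

/-- Column-distinctness, the only hypothesis needed for standardization to rank. -/
def ColDistinct (n : ℕ) (a : ℕ → ℕ) (T : ℕ × ℕ → ℕ) : Prop :=
  ∀ c ∈ keyDiagram n a, ∀ d ∈ keyDiagram n a, c.2 = d.2 → c ≠ d → T c ≠ T d

lemma keyLt_trichotomy {n : ℕ} {a : ℕ → ℕ} {T : ℕ × ℕ → ℕ} (hcd : ColDistinct n a T)
    {c d : ℕ × ℕ} (hc : c ∈ keyDiagram n a) (hd : d ∈ keyDiagram n a) (hne : c ≠ d) :
    keyLt T c d ∨ keyLt T d c := by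
  unfold keyLt
  rcases lt_trichotomy (T c) (T d) with h | h | h
  · exact Or.inl (Or.inl h)
  · rcases lt_trichotomy c.2 d.2 with h' | h' | h'
    · exact Or.inr (Or.inr ⟨h.symm, h'⟩)
    · exact absurd h (hcd c hc d hd h' hne)
    · exact Or.inl (Or.inr ⟨h, h'⟩)
  · exact Or.inr (Or.inl h)

/-- The set whose cardinality is `stdize`. -/
def Aset (n : ℕ) (a : ℕ → ℕ) (T : ℕ × ℕ → ℕ) (c : ℕ × ℕ) : Finset (ℕ × ℕ) :=
  (keyDiagram n a).filter (fun d => T d < T c ∨ (T d = T c ∧ c.2 ≤ d.2))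

lemma stdize_eq_card_Aset (n : ℕ) (a : ℕ → ℕ) (T : ℕ × ℕ → ℕ) (c : ℕ × ℕ) :
    stdize n a T c = (Aset n a T c).card := rfl

lemma mem_Aset_iff {n : ℕ} {a : ℕ → ℕ} {T : ℕ × ℕ → ℕ} (hcd : ColDistinct n a T)
    {c d : ℕ × ℕ} (hc : c ∈ keyDiagram n a) :
    d ∈ Aset n a T c ↔ d ∈ keyDiagram n a ∧ (d = c ∨ keyLt T d c) := by
  unfold Aset keyLt
  rw [Finset.mem_filter]
  constructor
  · rintro ⟨hd, h | ⟨h, h'⟩⟩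
    · exact ⟨hd, Or.inr (Or.inl h)⟩
    · rcases eq_or_lt_of_le h' with h'' | h''
      · refine ⟨hd, Or.inl ?_⟩
        by_contra hne
        exact hcd d hd c hc h''.symm hne h
      · exact ⟨hd, Or.inr (Or.inr ⟨h, h''⟩)⟩
  · rintro ⟨hd, rfl | (h | ⟨h, h'⟩)⟩
    · exact ⟨hd, Or.inr ⟨rfl, le_refl _⟩⟩
    · exact ⟨hd, Or.inl h⟩
    · exact ⟨hd, Or.inr ⟨h, le_of_lt h'⟩⟩

lemma Aset_ssubset {n : ℕ} {a : ℕ → ℕ} {T : ℕ × ℕ → ℕ} (hcd : ColDistinct n a T)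
    {c d : ℕ × ℕ} (hc : c ∈ keyDiagram n a) (hd : d ∈ keyDiagram n a)
    (h : keyLt T c d) : Aset n a T c ⊂ Aset n a T d := by
  constructor
  · intro e he
    rw [mem_Aset_iff hcd hc] at he
    rw [mem_Aset_iff hcd hd]
    rcases he.2 with rfl | h'
    · exact ⟨he.1, Or.inr h⟩
    · exact ⟨he.1, Or.inr (keyLt_trans h' h)⟩
  · intro hsub
    have : d ∈ Aset n a T c := hsub ((mem_Aset_iff hcd hd).mpr ⟨hd, Or.inl rfl⟩)
    rw [mem_Aset_iff hcd hc] at this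
    rcases this.2 with rfl | h'
    · exact keyLt_asymm h h
    · exact keyLt_asymm h h'

lemma stdize_lt_of_keyLt {n : ℕ} {a : ℕ → ℕ} {T : ℕ × ℕ → ℕ} (hcd : ColDistinct n a T)
    {c d : ℕ × ℕ} (hc : c ∈ keyDiagram n a) (hd : d ∈ keyDiagram n a)
    (h : keyLt T c d) : stdize n a T c < stdize n a T d :=
  Finset.card_lt_card (Aset_ssubset hcd hc hd h)

lemma stdize_injOn {n : ℕ} {a : ℕ → ℕ} {T : ℕ × ℕ → ℕ} (hcd : ColDistinct n a T)
    {c d : ℕ × ℕ} (hc : c ∈ keyDiagram n a) (hd : d ∈ keyDiagram n a)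
    (h : stdize n a T c = stdize n a T d) : c = d := by
  by_contra hne
  rcases keyLt_trichotomy hcd hc hd hne with h' | h'
  · exact absurd h (Nat.ne_of_lt (stdize_lt_of_keyLt hcd hc hd h'))
  · exact absurd h.symm (Nat.ne_of_lt (stdize_lt_of_keyLt hcd hd hc h'))

lemma stdize_lt_iff {n : ℕ} {a : ℕ → ℕ} {T : ℕ × ℕ → ℕ} (hcd : ColDistinct n a T)
    {c d : ℕ × ℕ} (hc : c ∈ keyDiagram n a) (hd : d ∈ keyDiagram n a) :
    stdize n a T c < stdize n a T d ↔ keyLt T c d := by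
  constructor
  · intro h
    by_cases hne : c = d
    · subst hne; omega
    rcases keyLt_trichotomy hcd hc hd hne with h' | h'
    · exact h'
    · exact absurd (stdize_lt_of_keyLt hcd hd hc h') (by omega)
  · exact stdize_lt_of_keyLt hcd hc hd

lemma one_le_stdize {n : ℕ} {a : ℕ → ℕ} {T : ℕ × ℕ → ℕ}
    {c : ℕ × ℕ} (hc : c ∈ keyDiagram n a) : 1 ≤ stdize n a T c := by
  rw [stdize_eq_card_Aset]
  refine Finset.card_pos.mpr ⟨c, ?_⟩
  unfold Aset
  exact Finset.mem_filter.mpr ⟨hc, Or.inr ⟨rfl, le_refl _⟩⟩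

lemma stdize_le_NN {n : ℕ} {a : ℕ → ℕ} {T : ℕ × ℕ → ℕ} (c : ℕ × ℕ) :
    stdize n a T c ≤ NN n a := by
  rw [stdize_eq_card_Aset, ← card_keyDiagram n a]
  exact Finset.card_le_card (Finset.filter_subset _ _)

lemma stdize_bijOn {n : ℕ} {a : ℕ → ℕ} {T : ℕ × ℕ → ℕ} (hcd : ColDistinct n a T) :
    Set.BijOn (stdize n a T) (keyDiagram n a : Set (ℕ × ℕ)) (Set.Icc 1 (NN n a)) := by
  have hmaps : ∀ c ∈ keyDiagram n a, stdize n a T c ∈ Finset.Icc 1 (NN n a) := by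
    intro c hc
    exact Finset.mem_Icc.mpr ⟨one_le_stdize hc, stdize_le_NN c⟩
  have hinj : Set.InjOn (stdize n a T) (keyDiagram n a : Set (ℕ × ℕ)) := by
    intro c hc d hd h
    exact stdize_injOn hcd hc hd h
  have himg : (keyDiagram n a).image (stdize n a T) = Finset.Icc 1 (NN n a) := by
    apply Finset.eq_of_subset_of_card_le
    · intro x hx
      rw [Finset.mem_image] at hx
      obtain ⟨c, hc, rfl⟩ := hx
      exact hmaps c hc
    · rw [Finset.card_image_of_injOn hinj, card_keyDiagram, Nat.card_Icc]
      omega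
  refine ⟨fun c hc => ?_, hinj, fun x hx => ?_⟩
  · have := hmaps c hc
    rw [Finset.mem_Icc] at this
    exact Set.mem_Icc.mpr this
  · rw [Set.mem_Icc] at hx
    have : x ∈ (keyDiagram n a).image (stdize n a T) := by
      rw [himg]; exact Finset.mem_Icc.mpr hx
    rw [Finset.mem_image] at this
    obtain ⟨c, hc, rfl⟩ := this
    exact ⟨c, hc, rfl⟩

lemma stdF_apply {n : ℕ} {a : ℕ → ℕ} (T : ℕ × ℕ → ℕ) (c : ℕ × ℕ) :
    (stdF n a T) c = if c ∈ keyDiagram n a then stdize n a T c else 0 := by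
  unfold stdF
  rw [sum_single_apply]
  by_cases h : c ∈ keyDiagram n a <;> simp [h]

lemma wtF_apply {n : ℕ} {a : ℕ → ℕ} (T : ℕ × ℕ → ℕ) (m : ℕ) :
    (wtF n a T) m = ((keyDiagram n a).filter (fun c => T c = m)).card := by
  unfold wtF
  rw [Finsupp.finset_sum_apply, Finset.card_filter]
  refine Finset.sum_congr rfl fun c _ => ?_
  by_cases h : T c = m <;> simp [Finsupp.single_apply, h]

/-! ### tval machinery -/

lemma rowOf_colOf_bounds {n : ℕ} {a : ℕ → ℕ} {S : ℕ × ℕ → ℕ} (hS : IsStandardFilling n a S)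
    {i : ℕ} (h1 : 1 ≤ i) (h2 : i ≤ NN n a) :
    1 ≤ rowOf n a S i ∧ rowOf n a S i ≤ n ∧ 1 ≤ colOf n a S i := by
  have h := (cellOf_spec hS h1 h2).1
  rw [mem_keyDiagram] at h
  exact ⟨h.1, h.2.1, h.2.2.1⟩

lemma tval_top {n : ℕ} {a : ℕ → ℕ} (S : ℕ × ℕ → ℕ) :
    tval n a S (NN n a) =
      if colOf n a S (NN n a) = 1 then (rowOf n a S (NN n a) : ℤ) else (n : ℤ) := by
  unfold tval
  rw [Nat.sub_self]
  rfl

lemma tval_succ {n : ℕ} {a : ℕ → ℕ} (S : ℕ × ℕ → ℕ) {i : ℕ} (h1 : 1 ≤ i)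
    (h2 : i < NN n a) :
    tval n a S i =
      if colOf n a S i ≤ colOf n a S (i + 1) then
        (if colOf n a S i = 1 then min (rowOf n a S i : ℤ) (tval n a S (i + 1) - 1)
         else tval n a S (i + 1) - 1)
      else tval n a S (i + 1) := by
  unfold tval
  have hm : NN n a - i = (NN n a - (i + 1)) + 1 := by omega
  rw [hm]
  have hback : NN n a - ((NN n a - (i + 1)) + 1) = i := by omega
  rw [tvalAux, hback]

lemma tval_le_n {n : ℕ} {a : ℕ → ℕ} {S : ℕ × ℕ → ℕ} (hS : IsStandardFilling n a S) :
    ∀ k i : ℕ, 1 ≤ i → i ≤ NN n a → NN n a - i = k → tval n a S i ≤ (n : ℤ) := by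
  intro k
  induction k with
  | zero =>
    intro i h1 h2 hk
    have : i = NN n a := by omega
    subst this
    rw [tval_top]
    split
    · exact_mod_cast (rowOf_colOf_bounds hS h1 h2).2.1
    · exact le_refl _
  | succ k ih =>
    intro i h1 h2 hk
    have h2' : i < NN n a := by omega
    have hrec := ih (i + 1) (by omega) (by omega) (by omega)
    rw [tval_succ S h1 h2']
    have hrow : (rowOf n a S i : ℤ) ≤ n := by
      exact_mod_cast (rowOf_colOf_bounds hS h1 (le_of_lt h2')).2.1
    split
    · split
      · exact le_trans (min_le_left _ _) hrow
      · omega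
    · exact hrec

lemma tval_le_n' {n : ℕ} {a : ℕ → ℕ} {S : ℕ × ℕ → ℕ} (hS : IsStandardFilling n a S)
    {i : ℕ} (h1 : 1 ≤ i) (h2 : i ≤ NN n a) : tval n a S i ≤ (n : ℤ) :=
  tval_le_n hS (NN n a - i) i h1 h2 rfl

lemma tval_break {n : ℕ} {a : ℕ → ℕ} (S : ℕ × ℕ → ℕ) {i : ℕ} (h1 : 1 ≤ i)
    (h2 : i < NN n a) (hb : colOf n a S i ≤ colOf n a S (i + 1)) :
    tval n a S i ≤ tval n a S (i + 1) - 1 := by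
  rw [tval_succ S h1 h2, if_pos hb]
  split
  · exact min_le_right _ _
  · exact le_refl _

lemma tval_nobreak {n : ℕ} {a : ℕ → ℕ} (S : ℕ × ℕ → ℕ) {i : ℕ} (h1 : 1 ≤ i)
    (h2 : i < NN n a) (hb : ¬ colOf n a S i ≤ colOf n a S (i + 1)) :
    tval n a S i = tval n a S (i + 1) := by
  rw [tval_succ S h1 h2, if_neg hb]

lemma tval_mono_succ {n : ℕ} {a : ℕ → ℕ} (S : ℕ × ℕ → ℕ) {i : ℕ} (h1 : 1 ≤ i)
    (h2 : i < NN n a) : tval n a S i ≤ tval n a S (i + 1) := by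
  by_cases hb : colOf n a S i ≤ colOf n a S (i + 1)
  · have := tval_break S h1 h2 hb; omega
  · exact le_of_eq (tval_nobreak S h1 h2 hb)

lemma tval_mono {n : ℕ} {a : ℕ → ℕ} (S : ℕ × ℕ → ℕ) {i j : ℕ} (h1 : 1 ≤ i)
    (hij : i ≤ j) (h2 : j ≤ NN n a) : tval n a S i ≤ tval n a S j := by
  induction j with
  | zero => omega
  | succ j ih =>
    rcases Nat.lt_or_ge i (j + 1) with h | h
    · have hj1 : 1 ≤ j := by omega
      exact le_trans (ih (by omega) (by omega)) (tval_mono_succ S hj1 (by omega))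
    · have : i = j + 1 := by omega
      subst this
      exact le_refl _

lemma tval_col1_le_row {n : ℕ} {a : ℕ → ℕ} {S : ℕ × ℕ → ℕ} (hS : IsStandardFilling n a S)
    {i : ℕ} (h1 : 1 ≤ i) (h2 : i ≤ NN n a) (hcol : colOf n a S i = 1) :
    tval n a S i ≤ (rowOf n a S i : ℤ) := by
  rcases Nat.lt_or_ge i (NN n a) with h | h
  · have hb : colOf n a S i ≤ colOf n a S (i + 1) := by
      rw [hcol]
      exact (rowOf_colOf_bounds hS (by omega) (by omega)).2.2
    rw [tval_succ S h1 h, if_pos hb, if_pos hcol]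
    exact min_le_left _ _
  · have : i = NN n a := by omega
    subst this
    rw [tval_top, if_pos hcol]
/-! ### Pointwise bound by tval -/

lemma le_tval_of {n : ℕ} {a : ℕ → ℕ} {S : ℕ × ℕ → ℕ} (hS : IsStandardFilling n a S)
    {w : ℕ → ℕ}
    (hjump : ∀ i, 1 ≤ i → i < NN n a → colOf n a S i ≤ colOf n a S (i + 1) → w i < w (i + 1))
    (hmono : ∀ i, 1 ≤ i → i < NN n a → w i ≤ w (i + 1))
    (hrow : ∀ i, 1 ≤ i → i ≤ NN n a → w i ≤ rowOf n a S i)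
    (hn : ∀ i, 1 ≤ i → i ≤ NN n a → w i ≤ n) :
    ∀ k i : ℕ, 1 ≤ i → i ≤ NN n a → NN n a - i = k → (w i : ℤ) ≤ tval n a S i := by
  intro k
  induction k with
  | zero =>
    intro i h1 h2 hk
    have hiN : i = NN n a := by omega
    subst hiN
    rw [tval_top]
    split
    · exact_mod_cast hrow _ h1 h2
    · exact_mod_cast hn _ h1 h2
  | succ k ih =>
    intro i h1 h2 hk
    have h2' : i < NN n a := by omega
    have hrec := ih (i + 1) (by omega) (by omega) (by omega)
    rw [tval_succ S h1 h2']
    by_cases hb : colOf n a S i ≤ colOf n a S (i + 1)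
    · rw [if_pos hb]
      have hj := hjump i h1 h2' hb
      have : (w i : ℤ) ≤ tval n a S (i + 1) - 1 := by
        have : (w i : ℤ) + 1 ≤ (w (i + 1) : ℤ) := by exact_mod_cast hj
        omega
      split
      · refine le_min ?_ this
        exact_mod_cast hrow _ h1 (le_of_lt h2')
      · exact this
    · rw [if_neg hb]
      exact le_trans (by exact_mod_cast hmono i h1 h2') hrec

/-! ### Partition counting -/

lemma sum_card_filter_eq {γ : Type*} (s : Finset γ) (g : γ → ℕ) (k : ℕ)
    (hg : ∀ x ∈ s, 1 ≤ g x) :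
    ∑ j ∈ Finset.Icc 1 k, (s.filter (fun x => g x = j)).card
      = (s.filter (fun x => g x ≤ k)).card := by
  classical
  rw [Finset.card_eq_sum_card_fiberwise (f := g) (t := Finset.Icc 1 k)
    (fun x hx => by
      rw [Finset.mem_coe, Finset.mem_filter] at hx
      exact Finset.mem_Icc.mpr ⟨hg x hx.1, hx.2⟩)]
  refine Finset.sum_congr rfl fun j hj => ?_
  rw [Finset.filter_filter]
  congr 1
  apply Finset.filter_congr
  intro x _
  constructor
  · rintro h; exact ⟨h ▸ (Finset.mem_Icc.mp hj).2, h⟩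
  · rintro ⟨_, h⟩; exact h

/-! ### bsum and muOf -/

/-- partial sums -/
def bsum (b : ℕ → ℕ) (k : ℕ) : ℕ := ∑ j ∈ Finset.Icc 1 k, b j

lemma bsum_zero (b : ℕ → ℕ) : bsum b 0 = 0 := by
  unfold bsum
  rw [show Finset.Icc 1 0 = ∅ from rfl]
  rfl

lemma bsum_succ (b : ℕ → ℕ) (m : ℕ) : bsum b (m + 1) = bsum b m + b (m + 1) :=
  Finset.sum_Icc_succ_top (by omega) b

lemma bsum_mono (b : ℕ → ℕ) {k k' : ℕ} (h : k ≤ k') : bsum b k ≤ bsum b k' :=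
  Finset.sum_le_sum_of_subset (Finset.Icc_subset_Icc_right h)

/-- the inverse-partial-sum value function -/
def muOf (b : ℕ → ℕ) (i : ℕ) : ℕ := sInf {m | i ≤ bsum b m}

lemma le_bsum_muOf {b : ℕ → ℕ} {i n : ℕ} (hne : i ≤ bsum b n) : i ≤ bsum b (muOf b i) :=
  Nat.sInf_mem (⟨n, hne⟩ : {m | i ≤ bsum b m}.Nonempty)

lemma muOf_le_iff {b : ℕ → ℕ} {i n m : ℕ} (hne : i ≤ bsum b n) :
    muOf b i ≤ m ↔ i ≤ bsum b m := by
  constructor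
  · intro h
    exact le_trans (le_bsum_muOf hne) (bsum_mono b h)
  · intro h
    exact Nat.sInf_le h

lemma one_le_muOf {b : ℕ → ℕ} {i n : ℕ} (hne : i ≤ bsum b n) (hi : 1 ≤ i) :
    1 ≤ muOf b i := by
  by_contra h
  push_neg at h
  have h0 : muOf b i = 0 := by omega
  have := le_bsum_muOf hne
  rw [h0, bsum_zero] at this
  omega

lemma muOf_le_n {b : ℕ → ℕ} {i n : ℕ} (hne : i ≤ bsum b n) : muOf b i ≤ n :=
  Nat.sInf_le hne

lemma muOf_mono {b : ℕ → ℕ} {i j n : ℕ} (hj : j ≤ bsum b n) (hij : i ≤ j) :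
    muOf b i ≤ muOf b j :=
  Nat.sInf_le (le_trans hij (le_bsum_muOf hj))

lemma muOf_count {b : ℕ → ℕ} {n m : ℕ} (N : ℕ) (hN : bsum b n = N) (hm : m ≤ n) :
    ((Finset.Icc 1 N).filter (fun i => muOf b i ≤ m)).card = bsum b m := by
  have hble : bsum b m ≤ N := hN ▸ bsum_mono b hm
  have : (Finset.Icc 1 N).filter (fun i => muOf b i ≤ m) = Finset.Icc 1 (bsum b m) := by
    ext i
    rw [Finset.mem_filter, Finset.mem_Icc, Finset.mem_Icc]
    constructor
    · rintro ⟨⟨hi1, _⟩, hmu⟩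
      exact ⟨hi1, (muOf_le_iff (n := n) (by omega)).mp hmu⟩
    · rintro ⟨hi1, hi2⟩
      exact ⟨⟨hi1, le_trans hi2 hble⟩, Nat.sInf_le hi2⟩
  rw [this, Nat.card_Icc]
  omega
/-! ### Prefix sums of lists and refinement -/

/-- prefix sum of a list -/
def psum (l : List ℕ) (k : ℕ) : ℕ := (l.take k).sum

lemma psum_zero (l : List ℕ) : psum l 0 = 0 := rfl

lemma psum_add (l : List ℕ) (m k : ℕ) :
    psum l (m + k) = psum l m + ((l.drop m).take k).sum := by
  unfold psum
  rw [List.take_add, List.sum_append]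

lemma psum_mono (l : List ℕ) {m m' : ℕ} (h : m ≤ m') : psum l m ≤ psum l m' := by
  have : m' = m + (m' - m) := by omega
  rw [this, psum_add]
  omega

lemma psum_of_length_le (l : List ℕ) {m : ℕ} (h : l.length ≤ m) : psum l m = l.sum := by
  unfold psum
  rw [List.take_of_length_le h]

lemma psum_length (l : List ℕ) : psum l l.length = l.sum := psum_of_length_le l (le_refl _)

lemma psum_le_sum (l : List ℕ) (m : ℕ) : psum l m ≤ l.sum := by
  rcases Nat.le_total l.length m with h | h
  · rw [psum_of_length_le l h]
  · rw [← psum_length]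
    exact psum_mono l h

lemma psum_strict_mono {l : List ℕ} (hpos : ∀ x ∈ l, x ≠ 0) {m m' : ℕ}
    (h : m < m') (h2 : m < l.length) : psum l m < psum l m' := by
  have hm' : m + 1 ≤ m' := h
  refine lt_of_lt_of_le ?_ (psum_mono l hm')
  rw [show m + 1 = m + 1 from rfl, psum_add]
  have hdrop : l.drop m ≠ [] := by
    rw [ne_eq, List.drop_eq_nil_iff]
    omega
  obtain ⟨y, ys, hys⟩ := List.exists_cons_of_ne_nil hdrop
  have hy : y ∈ l := by
    have : y ∈ l.drop m := by rw [hys]; exact List.mem_cons_self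
    exact List.mem_of_mem_drop this
  have : ((l.drop m).take 1).sum = y := by rw [hys]; simp
  rw [this]
  have := hpos y hy
  omega

lemma refines_psum {β α : List ℕ} (h : Refines β α) :
    ∀ j, ∃ j', psum α j = psum β j' := by
  obtain ⟨L, hfl, hmap, -⟩ := h
  intro j
  refine ⟨(L.take j).flatten.length, ?_⟩
  have h1 : psum α j = (L.take j).flatten.sum := by
    rw [← hmap]
    unfold psum
    rw [← List.map_take, List.sum_flatten]
  have h2 : β.take (L.take j).flatten.length = (L.take j).flatten := by
    have hb : β = (L.take j).flatten ++ (L.drop j).flatten := by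
      rw [← List.flatten_append, List.take_append_drop, hfl]
    rw [hb]
    exact List.take_left
  rw [h1]
  unfold psum
  rw [h2]

lemma refines_of_psum : ∀ (α : List ℕ) (β : List ℕ), (∀ x ∈ α, x ≠ 0) → (∀ x ∈ β, x ≠ 0) →
    α.sum = β.sum → (∀ j, ∃ j', psum α j = psum β j') → Refines β α := by
  intro α
  induction α with
  | nil =>
    intro β _ hβ hsum _
    have hβ0 : β = [] := by
      cases β with
      | nil => rfl
      | cons x xs =>
        exfalso
        have hx := hβ x (List.mem_cons_self)
        simp at hsum
        exact hx (by omega)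
    subst hβ0
    exact ⟨[], rfl, rfl, by simp⟩
  | cons a α' ih =>
    intro β hα hβ hsum h
    obtain ⟨j₀, hj₀⟩ := h 1
    have hj₀' : a = psum β j₀ := by
      have : psum (a :: α') 1 = a := by unfold psum; simp
      rw [← this, hj₀]
    set c := β.take j₀ with hc
    have hcsum : c.sum = a := hj₀'.symm
    have ha0 : a ≠ 0 := hα a (List.mem_cons_self)
    have hcne : c ≠ [] := by
      intro h0
      rw [h0] at hcsum
      exact ha0 (by simpa using hcsum.symm)
    have hclen : c.length ≤ j₀ := by
      rw [hc]
      exact le_trans (List.length_take : (List.take j₀ β).length = min j₀ β.length).le (min_le_left _ _)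
    have hceq : β.take c.length = c := by
      rw [hc, List.length_take]
      rcases Nat.le_total j₀ β.length with hh | hh
      · rw [min_eq_left hh]
      · rw [min_eq_right hh, List.take_length, List.take_of_length_le hh]
    have hcpsum : psum β c.length = a := by
      unfold psum
      rw [hceq]
      exact hcsum
    set rest := β.drop j₀ with hrest
    have hsplit : β = c ++ rest := (List.take_append_drop j₀ β).symm
    have hrestmem : ∀ x ∈ rest, x ≠ 0 := fun x hx => hβ x (List.mem_of_mem_drop hx)
    have hrestsum : α'.sum = rest.sum := by
      have h1 : a + α'.sum = β.sum := by simpa using hsum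
      have h2 : β.sum = a + rest.sum := by
        conv_lhs => rw [hsplit]
        rw [List.sum_append, hcsum]
      omega
    have hpre : ∀ j, ∃ j', psum α' j = psum rest j' := by
      intro j
      obtain ⟨m, hm⟩ := h (j + 1)
      have hm' : a + psum α' j = psum β m := by
        have : psum (a :: α') (j + 1) = a + psum α' j := by
          unfold psum
          rw [List.take_succ_cons, List.sum_cons]
        rw [← this, hm]
      -- replace m by min m β.length
      set m' := min m β.length with hm'def
      have hpm : psum β m' = psum β m := by
        rcases Nat.le_total m β.length with hh | hh
        · have : m' = m := by omega
          rw [this]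
        · have : m' = β.length := by omega
          rw [this, psum_length, psum_of_length_le β hh]
      have hm'len : m' ≤ β.length := min_le_right _ _
      have hge : c.length ≤ m' := by
        by_contra hlt
        push_neg at hlt
        have hlen : c.length ≤ β.length := by rw [hsplit]; simp
        have := psum_strict_mono hβ hlt (by omega)
        rw [hcpsum, hpm, ← hm'] at this
        omega
      refine ⟨m' - c.length, ?_⟩
      have : psum β m' = a + psum rest (m' - c.length) := by
        unfold psum
        conv_lhs => rw [hsplit]
        rw [List.take_append, List.take_of_length_le (by omega : c.length ≤ m'),
          List.sum_append, hcsum]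
      rw [hpm, ← hm'] at this
      omega
    obtain ⟨L', h1, h2, h3⟩ := ih rest (fun x hx => hα x (List.mem_cons_of_mem _ hx))
      hrestmem hrestsum hpre
    refine ⟨c :: L', ?_, ?_, ?_⟩
    · rw [List.flatten_cons, h1, ← hsplit]
    · rw [List.map_cons, h2, hcsum]
    · intro hmem
      rcases List.mem_cons.mp hmem with h' | h'
      · exact hcne h'.symm
      · exact h3 h'

/-! ### Bridging flat and bsum -/

lemma filter_cons_zero (xs : List ℕ) :
    (0 :: xs).filter (fun x => x ≠ 0) = xs.filter (fun x => x ≠ 0) := by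
  simp [List.filter_cons]

lemma filter_cons_pos {x : ℕ} (hx : x ≠ 0) (xs : List ℕ) :
    (x :: xs).filter (fun x => x ≠ 0) = x :: xs.filter (fun x => x ≠ 0) := by
  simp [List.filter_cons, hx]

lemma sum_filter_ne_zero : ∀ l : List ℕ, (l.filter (fun x => x ≠ 0)).sum = l.sum := by
  intro l
  induction l with
  | nil => rfl
  | cons x xs ih =>
    by_cases hx : x = 0
    · subst hx
      rw [filter_cons_zero]
      simpa using ih
    · rw [filter_cons_pos hx, List.sum_cons, List.sum_cons, ih]

lemma psum_filter_exists : ∀ (l : List ℕ) (k : ℕ),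
    ∃ j, psum l k = psum (l.filter (fun x => x ≠ 0)) j := by
  intro l
  induction l with
  | nil => intro k; exact ⟨0, by simp [psum]⟩
  | cons x xs ih =>
    intro k
    cases k with
    | zero => exact ⟨0, rfl⟩
    | succ k =>
      obtain ⟨j, hj⟩ := ih k
      by_cases hx : x = 0
      · subst hx
        refine ⟨j, ?_⟩
        rw [filter_cons_zero]
        unfold psum at hj ⊢
        rw [List.take_succ_cons, List.sum_cons, hj]
        omega
      · refine ⟨j + 1, ?_⟩
        rw [filter_cons_pos hx]
        unfold psum at hj ⊢
        rw [List.take_succ_cons, List.take_succ_cons, List.sum_cons, List.sum_cons, hj]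

lemma psum_filter_exists' : ∀ (l : List ℕ) (j : ℕ),
    ∃ k, k ≤ l.length ∧ psum (l.filter (fun x => x ≠ 0)) j = psum l k := by
  intro l
  induction l with
  | nil => intro j; exact ⟨0, le_refl _, by simp [psum]⟩
  | cons x xs ih =>
    intro j
    by_cases hx : x = 0
    · subst hx
      obtain ⟨k, hk, hkeq⟩ := ih j
      refine ⟨k + 1, by simp; omega, ?_⟩
      rw [filter_cons_zero]
      unfold psum at hkeq ⊢
      rw [List.take_succ_cons, List.sum_cons, hkeq]
      omega
    · cases j with
      | zero => exact ⟨0, by simp, rfl⟩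
      | succ j =>
        obtain ⟨k, hk, hkeq⟩ := ih j
        refine ⟨k + 1, by simp; omega, ?_⟩
        rw [filter_cons_pos hx]
        unfold psum at hkeq ⊢
        rw [List.take_succ_cons, List.take_succ_cons, List.sum_cons, List.sum_cons, hkeq]

lemma flat_eq (n : ℕ) (f : ℕ → ℕ) :
    flat n f = ((List.range n).map (fun i => f (i + 1))).filter (fun x => x ≠ 0) := rfl

lemma flat_pos (n : ℕ) (f : ℕ → ℕ) : ∀ x ∈ flat n f, x ≠ 0 := by
  intro x hx
  rw [flat_eq, List.mem_filter] at hx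
  simpa using hx.2

lemma bsum_eq_psum (f : ℕ → ℕ) {n k : ℕ} (h : k ≤ n) :
    bsum f k = psum ((List.range n).map (fun i => f (i + 1))) k := by
  induction k with
  | zero => rw [bsum_zero, psum_zero]
  | succ k ihk =>
    have hk : k ≤ n := by omega
    rw [bsum_succ, ihk hk]
    set L := (List.range n).map (fun i => f (i + 1)) with hL
    have hlen : L.length = n := by rw [hL]; simp
    have hklen : k < L.length := by omega
    have : psum L (k + 1) = psum L k + L[k] := by
      rw [show k + 1 = k + 1 from rfl, psum_add, List.take_one_drop_eq_of_lt_length hklen]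
      simp
    rw [this]
    congr 1
    simp [hL]

lemma sum_flat (n : ℕ) (f : ℕ → ℕ) : (flat n f).sum = bsum f n := by
  rw [flat_eq, sum_filter_ne_zero, ← psum_length, bsum_eq_psum f (le_refl n)]
  congr 1
  simp

lemma bsum_psum_flat (f : ℕ → ℕ) {n k : ℕ} (h : k ≤ n) :
    ∃ j, bsum f k = psum (flat n f) j := by
  obtain ⟨j, hj⟩ := psum_filter_exists ((List.range n).map (fun i => f (i + 1))) k
  exact ⟨j, by rw [bsum_eq_psum f h, flat_eq]; exact hj⟩

lemma psum_flat_bsum (f : ℕ → ℕ) (n j : ℕ) :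
    ∃ k, k ≤ n ∧ psum (flat n f) j = bsum f k := by
  obtain ⟨k, hk, hkeq⟩ := psum_filter_exists' ((List.range n).map (fun i => f (i + 1))) j
  have hkn : k ≤ n := by simpa using hk
  exact ⟨k, hkn, by rw [flat_eq] at *; rw [hkeq, ← bsum_eq_psum f hkn]⟩

/-- The main bridge: refinement from matching of partial sums. -/
lemma refines_flat_of_bsum {n : ℕ} {d b : ℕ → ℕ} (hsum : bsum d n = bsum b n)
    (h : ∀ k, k ≤ n → ∃ m, m ≤ n ∧ bsum d k = bsum b m) :
    Refines (flat n b) (flat n d) := by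
  apply refines_of_psum (flat n d) (flat n b) (flat_pos n d) (flat_pos n b)
  · rw [sum_flat, sum_flat, hsum]
  · intro j
    obtain ⟨k, hkn, hkeq⟩ := psum_flat_bsum d n j
    obtain ⟨m, hmn, hmeq⟩ := h k hkn
    obtain ⟨j', hj'⟩ := bsum_psum_flat b (n := n) hmn
    exact ⟨j', by rw [hkeq, hmeq, hj']⟩

/-- The converse bridge. -/
lemma bsum_of_refines_flat {n : ℕ} {d b : ℕ → ℕ}
    (h : Refines (flat n b) (flat n d)) :
    ∀ k, k ≤ n → ∃ m, m ≤ n ∧ bsum d k = bsum b m := by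
  intro k hk
  obtain ⟨j, hj⟩ := bsum_psum_flat d (n := n) hk
  obtain ⟨j', hj'⟩ := refines_psum h j
  obtain ⟨m, hmn, hmeq⟩ := psum_flat_bsum b n j'
  exact ⟨m, hmn, by rw [hj, hj', hmeq]⟩
/-! ### Abstract destandardization -/

section Abstract

variable {n : ℕ} {a : ℕ → ℕ} {S : ℕ × ℕ → ℕ} {w : ℕ → ℕ}

lemma S_mem_Icc (hS : IsStandardFilling n a S) {c : ℕ × ℕ} (hc : c ∈ keyDiagram n a) :
    1 ≤ S c ∧ S c ≤ NN n a := by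
  have := hS.1 hc
  rw [Set.mem_Icc] at this
  exact this

lemma cellOf_S (hS : IsStandardFilling n a S) {c : ℕ × ℕ} (hc : c ∈ keyDiagram n a) :
    cellOf n a S (S c) = c := (cellOf_unique hS hc rfl).symm

lemma rowOf_S (hS : IsStandardFilling n a S) {c : ℕ × ℕ} (hc : c ∈ keyDiagram n a) :
    rowOf n a S (S c) = c.1 := congrArg Prod.fst (cellOf_S hS hc)

lemma colOf_S (hS : IsStandardFilling n a S) {c : ℕ × ℕ} (hc : c ∈ keyDiagram n a) :
    colOf n a S (S c) = c.2 := congrArg Prod.snd (cellOf_S hS hc)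

lemma w_mono_of (hmono : ∀ i, 1 ≤ i → i < NN n a → w i ≤ w (i + 1)) :
    ∀ i j, 1 ≤ i → i ≤ j → j ≤ NN n a → w i ≤ w j := by
  intro i j h1 hij h2
  induction j with
  | zero => omega
  | succ j ih =>
    rcases Nat.lt_or_ge i (j + 1) with h | h
    · exact le_trans (ih (by omega) (by omega)) (hmono j (by omega) (by omega))
    · have : i = j + 1 := by omega
      subst this
      exact le_refl _

/-- within a level set of `w`, columns strictly decrease -/
lemma grp_col (hjump : ∀ i, 1 ≤ i → i < NN n a →
      colOf n a S i ≤ colOf n a S (i + 1) → w i < w (i + 1))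
    (hmono : ∀ i, 1 ≤ i → i < NN n a → w i ≤ w (i + 1)) :
    ∀ i j, 1 ≤ i → i < j → j ≤ NN n a → w i = w j → colOf n a S j < colOf n a S i := by
  intro i j h1 hij h2 hw
  induction j with
  | zero => omega
  | succ j ih =>
    have hstep : ∀ l, 1 ≤ l → l < NN n a → w l = w (l + 1) →
        colOf n a S (l + 1) < colOf n a S l := by
      intro l hl1 hl2 hl3
      by_contra hcol
      push_neg at hcol
      exact absurd hl3 (Nat.ne_of_lt (hjump l hl1 hl2 hcol))
    rcases Nat.lt_or_ge i j with h | h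
    · have hwj : w i = w j := by
        have := w_mono_of hmono i j h1 (by omega) (by omega)
        have := hmono j (by omega) (by omega)
        omega
      have h1' := ih (by omega) (by omega) hwj
      have h2' := hstep j (by omega) (by omega) (by omega)
      omega
    · have : i = j := by omega
      subst this
      exact hstep i h1 (by omega) hw

variable (hS : IsStandardFilling n a S) (hK : IsKeyTableau n a S)
  (hjump : ∀ i, 1 ≤ i → i < NN n a →
      colOf n a S i ≤ colOf n a S (i + 1) → w i < w (i + 1))
  (hmono : ∀ i, 1 ≤ i → i < NN n a → w i ≤ w (i + 1))

include hS hjump hmono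

/-- strictly smaller label in the same level set lies strictly left: cell version -/
lemma grp_col_cell {c d : ℕ × ℕ} (hc : c ∈ keyDiagram n a) (hd : d ∈ keyDiagram n a)
    (hlt : S c < S d) (hw : w (S c) = w (S d)) : d.2 < c.2 := by
  have h1 := S_mem_Icc hS hc
  have h2 := S_mem_Icc hS hd
  have := grp_col hjump hmono (S c) (S d) h1.1 hlt h2.2 hw
  rwa [colOf_S hS hc, colOf_S hS hd] at this

lemma destd_colDistinct : ColDistinct n a (fun c => w (S c)) := by
  intro c hc d hd hcol hne heq
  have heq' : w (S c) = w (S d) := heq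
  have h1 := S_mem_Icc hS hc
  have h2 := S_mem_Icc hS hd
  have hSne : S c ≠ S d := fun h => hne (hS.2.1 hc hd h)
  rcases Nat.lt_or_ge (S c) (S d) with h | h
  · have := grp_col_cell hS hjump hmono hc hd h heq'
    omega
  · have := grp_col_cell hS hjump hmono hd hc (by omega) heq'.symm
    omega

include hK

lemma destd_isKeyTableau (hw1 : ∀ i, 1 ≤ i → i ≤ NN n a → 1 ≤ w i) :
    IsKeyTableau n a (fun c => w (S c)) := by
  refine ⟨?_, destd_colDistinct hS hjump hmono, ?_, ?_⟩
  · intro c hc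
    have h1 := S_mem_Icc hS hc
    exact hw1 _ h1.1 h1.2
  · -- rows weakly decreasing
    intro r c hrc hrc1
    have hlt : S (r, c + 1) < S (r, c) := by
      have hle := hK.2.2.1 r c hrc hrc1
      have hne : S (r, c + 1) ≠ S (r, c) := fun h =>
        (by simp : ¬ ((r, c+1) : ℕ × ℕ) = (r, c)) (hS.2.1 hrc1 hrc h)
      omega
    exact w_mono_of hmono _ _ (S_mem_Icc hS hrc1).1 (le_of_lt hlt) (S_mem_Icc hS hrc).2
  · -- key condition
    intro r r' c hrc hr'c hrr' hWlt
    have hWlt' : w (S (r, c)) < w (S (r', c)) := hWlt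
    have hSlt : S (r, c) < S (r', c) := by
      rcases Nat.lt_or_ge (S (r, c)) (S (r', c)) with h | h
      · exact h
      · exfalso
        have := w_mono_of hmono _ _ (S_mem_Icc hS hr'c).1 h (S_mem_Icc hS hrc).2
        omega
    obtain ⟨hmem, hSlt2⟩ := hK.2.2.2 r r' c hrc hr'c hrr' hSlt
    refine ⟨hmem, ?_⟩
    have hwle : w (S (r, c)) ≤ w (S (r', c + 1)) :=
      w_mono_of hmono _ _ (S_mem_Icc hS hrc).1 (le_of_lt hSlt2) (S_mem_Icc hS hmem).2
    rcases Nat.lt_or_ge (w (S (r, c))) (w (S (r', c + 1))) with h | h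
    · exact h
    · exfalso
      have heq : w (S (r, c)) = w (S (r', c + 1)) := by omega
      have h3 : c + 1 < c := grp_col_cell hS hjump hmono hrc hmem hSlt2 heq
      omega

omit hK

omit hjump hmono in
lemma destd_rowBounded
    (hcol1 : ∀ i, 1 ≤ i → i ≤ NN n a → colOf n a S i = 1 → w i ≤ rowOf n a S i)
    (hrowdec : ∀ r c : ℕ, (r, c) ∈ keyDiagram n a → (r, c + 1) ∈ keyDiagram n a →
      w (S (r, c + 1)) ≤ w (S (r, c))) :
    RowBounded n a (fun c => w (S c)) := by
  have hcell : ∀ m : ℕ, ∀ r : ℕ, (r, m + 1) ∈ keyDiagram n a → w (S (r, m + 1)) ≤ r := by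
    intro m
    induction m with
    | zero =>
      intro r hmem
      have h1 := S_mem_Icc hS hmem
      have := hcol1 (S (r, 1)) h1.1 h1.2 (by rw [colOf_S hS hmem])
      rwa [rowOf_S hS hmem] at this
    | succ m ih =>
      intro r hmem
      have hleft : (r, m + 1) ∈ keyDiagram n a := keyDiagram_left hmem (by omega)
      exact le_trans (hrowdec r (m + 1) hleft hmem) (ih r hleft)
  intro c hc
  have hc2 : 1 ≤ c.2 := (mem_keyDiagram.mp hc).2.2.1
  obtain ⟨m, hm⟩ : ∃ m, c.2 = m + 1 := ⟨c.2 - 1, by omega⟩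
  have : c = (c.1, m + 1) := by rw [← hm]
  rw [this] at hc ⊢
  exact hcell m c.1 hc

/-- destandardization standardizes back to `S`. -/
lemma destd_stdize {c : ℕ × ℕ} (hc : c ∈ keyDiagram n a) :
    stdize n a (fun d => w (S d)) c = S c := by
  have hA : Aset n a (fun d => w (S d)) c = (keyDiagram n a).filter (fun d => S d ≤ S c) := by
    ext d
    unfold Aset
    rw [Finset.mem_filter, Finset.mem_filter]
    constructor
    · rintro ⟨hd, hcase⟩
      refine ⟨hd, ?_⟩
      have hcase' : w (S d) < w (S c) ∨ (w (S d) = w (S c) ∧ c.2 ≤ d.2) := hcase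
      rcases hcase' with h | ⟨h, h2⟩
      · by_contra hlt
        push_neg at hlt
        have := w_mono_of hmono _ _ (S_mem_Icc hS hc).1 (le_of_lt hlt) (S_mem_Icc hS hd).2
        omega
      · by_contra hlt
        push_neg at hlt
        have := grp_col_cell hS hjump hmono hc hd hlt h.symm
        omega
    · rintro ⟨hd, hle⟩
      refine ⟨hd, ?_⟩
      rcases Nat.lt_or_ge (S d) (S c) with h | h
      · have hwle := w_mono_of hmono _ _ (S_mem_Icc hS hd).1 (le_of_lt h) (S_mem_Icc hS hc).2
        rcases Nat.lt_or_ge (w (S d)) (w (S c)) with h2 | h2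
        · exact Or.inl h2
        · have heq : w (S d) = w (S c) := by omega
          have := grp_col_cell hS hjump hmono hd hc h heq
          exact Or.inr ⟨heq, le_of_lt this⟩
      · have : S d = S c := by omega
        have hdc : d = c := hS.2.1 hd hc this
        subst hdc
        exact Or.inr ⟨rfl, le_refl _⟩
  rw [stdize_eq_card_Aset, hA]
  have h1 := S_mem_Icc hS hc
  have : ((keyDiagram n a).filter (fun d => S d ≤ S c)).card = (Finset.Icc 1 (S c)).card := by
    apply Finset.card_nbij (i := S)
    · intro d hd
      rw [Finset.mem_coe, Finset.mem_filter] at hd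
      exact Finset.mem_Icc.mpr ⟨(S_mem_Icc hS hd.1).1, hd.2⟩
    · intro d hd e he hde
      simp only [Finset.coe_filter, Set.mem_setOf_eq] at hd he
      exact hS.2.1 hd.1 he.1 hde
    · intro x hx
      rw [Finset.mem_coe, Finset.mem_Icc] at hx
      obtain ⟨d, hd, hdx⟩ := hS.2.2 (Set.mem_Icc.mpr ⟨hx.1, le_trans hx.2 h1.2⟩)
      refine ⟨d, ?_, hdx⟩
      simp only [Finset.coe_filter, Set.mem_setOf_eq]
      exact ⟨hd, by omega⟩
  rw [this, Nat.card_Icc]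
  omega

end Abstract
/-! ### Congruence lemmas -/

section Congr

variable {n : ℕ} {a : ℕ → ℕ} {T T' : ℕ × ℕ → ℕ}

lemma isKeyTableau_congr (h : ∀ c ∈ keyDiagram n a, T c = T' c)
    (hT : IsKeyTableau n a T) : IsKeyTableau n a T' := by
  obtain ⟨h1, h2, h3, h4⟩ := hT
  refine ⟨?_, ?_, ?_, ?_⟩
  · intro c hc; rw [← h c hc]; exact h1 c hc
  · intro c hc d hd hcd hne
    rw [← h c hc, ← h d hd]; exact h2 c hc d hd hcd hne
  · intro r c hrc hrc1
    rw [← h _ hrc, ← h _ hrc1]; exact h3 r c hrc hrc1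
  · intro r r' c hrc hr'c hrr' hlt
    rw [← h _ hrc, ← h _ hr'c] at hlt
    obtain ⟨hm, hl⟩ := h4 r r' c hrc hr'c hrr' hlt
    exact ⟨hm, by rw [← h _ hrc, ← h _ hm]; exact hl⟩

lemma rowBounded_congr (h : ∀ c ∈ keyDiagram n a, T c = T' c)
    (hT : RowBounded n a T) : RowBounded n a T' := by
  intro c hc; rw [← h c hc]; exact hT c hc

lemma isStandardFilling_congr (h : ∀ c ∈ keyDiagram n a, T c = T' c)
    (hT : IsStandardFilling n a T) : IsStandardFilling n a T' :=
  hT.congr (fun c hc => h c (Finset.mem_coe.mp hc))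

lemma stdize_congr (h : ∀ c ∈ keyDiagram n a, T c = T' c) {c : ℕ × ℕ}
    (hc : c ∈ keyDiagram n a) : stdize n a T c = stdize n a T' c := by
  rw [stdize_eq_card_Aset, stdize_eq_card_Aset]
  congr 1
  unfold Aset
  apply Finset.filter_congr
  intro d hd
  rw [h d hd, h c hc]

lemma wtF_congr (h : ∀ c ∈ keyDiagram n a, T c = T' c) : wtF n a T = wtF n a T' := by
  unfold wtF
  exact Finset.sum_congr rfl fun c hc => by rw [h c hc]

lemma rowOf_congr (h : ∀ c ∈ keyDiagram n a, T c = T' c) (i : ℕ) :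
    rowOf n a T i = rowOf n a T' i := by
  unfold rowOf
  congr 1
  apply Finset.filter_congr
  intro d hd
  rw [h d hd]

lemma colOf_congr (h : ∀ c ∈ keyDiagram n a, T c = T' c) (i : ℕ) :
    colOf n a T i = colOf n a T' i := by
  unfold colOf
  congr 1
  apply Finset.filter_congr
  intro d hd
  rw [h d hd]

lemma tvalAux_congr (h : ∀ c ∈ keyDiagram n a, T c = T' c) (m : ℕ) :
    tvalAux n a T m = tvalAux n a T' m := by
  induction m with
  | zero =>
    rw [tvalAux, tvalAux, rowOf_congr h, colOf_congr h]
  | succ m ih =>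
    rw [tvalAux, tvalAux, ih, rowOf_congr h, colOf_congr h, colOf_congr h]

lemma tval_congr (h : ∀ c ∈ keyDiagram n a, T c = T' c) (i : ℕ) :
    tval n a T i = tval n a T' i := tvalAux_congr h _

end Congr

/-! ### desComp and destdF -/

/-- The weak descent composition as a function. -/
def desComp (n : ℕ) (a : ℕ → ℕ) (S : ℕ × ℕ → ℕ) : ℕ → ℕ := fun r =>
  ((Finset.Icc 1 (NN n a)).filter (fun i => tval n a S i = (r : ℤ))).card

lemma desOpt_eq (n : ℕ) (a : ℕ → ℕ) (S : ℕ × ℕ → ℕ) :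
    desOpt n a S = if ∀ i ∈ Finset.Icc 1 (NN n a), 1 ≤ tval n a S i
      then some (desComp n a S) else none := rfl

/-- Destandardization of a standard filling along a weight. -/
def destdF (n : ℕ) (a : ℕ → ℕ) (b : ℕ → ℕ) (S : ℕ × ℕ → ℕ) : (ℕ × ℕ) →₀ ℕ :=
  ∑ c ∈ keyDiagram n a, Finsupp.single c (muOf b (S c))

lemma destdF_apply (n : ℕ) (a : ℕ → ℕ) (b : ℕ → ℕ) (S : ℕ × ℕ → ℕ) (c : ℕ × ℕ) :
    (destdF n a b S) c = if c ∈ keyDiagram n a then muOf b (S c) else 0 := by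
  unfold destdF
  rw [sum_single_apply]
  by_cases h : c ∈ keyDiagram n a <;> simp [h]

/-! ### tvN counting -/

section TvN

variable {n : ℕ} {a : ℕ → ℕ} {S : ℕ × ℕ → ℕ}

lemma tvN_cast (hv : ∀ i ∈ Finset.Icc 1 (NN n a), 1 ≤ tval n a S i) {i : ℕ}
    (h1 : 1 ≤ i) (h2 : i ≤ NN n a) :
    ((tval n a S i).toNat : ℤ) = tval n a S i :=
  Int.toNat_of_nonneg (by
    have := hv i (Finset.mem_Icc.mpr ⟨h1, h2⟩); omega)

lemma tvN_mono (hv : ∀ i ∈ Finset.Icc 1 (NN n a), 1 ≤ tval n a S i) :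
    ∀ ⦃i j : ℕ⦄, 1 ≤ i → i ≤ j → j ≤ NN n a →
      (tval n a S i).toNat ≤ (tval n a S j).toNat := by
  intro i j h1 hij h2
  have := tval_mono S h1 hij h2
  omega

lemma desComp_bsum (hS : IsStandardFilling n a S)
    (hv : ∀ i ∈ Finset.Icc 1 (NN n a), 1 ≤ tval n a S i) {k : ℕ} :
    bsum (desComp n a S) k
      = ((Finset.Icc 1 (NN n a)).filter (fun i => (tval n a S i).toNat ≤ k)).card := by
  unfold bsum desComp
  rw [show (∑ r ∈ Finset.Icc 1 k,
      ((Finset.Icc 1 (NN n a)).filter (fun i => tval n a S i = (r : ℤ))).card)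
    = ∑ r ∈ Finset.Icc 1 k,
      ((Finset.Icc 1 (NN n a)).filter (fun i => (tval n a S i).toNat = r)).card from
    Finset.sum_congr rfl fun r _ => by
      congr 1
      apply Finset.filter_congr
      intro i hi
      rw [Finset.mem_Icc] at hi
      have := hv i (Finset.mem_Icc.mpr hi)
      constructor
      · intro h; omega
      · intro h; omega]
  apply sum_card_filter_eq
  intro i hi
  have := hv i hi
  omega

lemma NN_desComp (hS : IsStandardFilling n a S)
    (hv : ∀ i ∈ Finset.Icc 1 (NN n a), 1 ≤ tval n a S i) :
    NN n (desComp n a S) = NN n a := by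
  have h1 : NN n (desComp n a S) = bsum (desComp n a S) n := rfl
  rw [h1, desComp_bsum hS hv]
  have : (Finset.Icc 1 (NN n a)).filter (fun i => (tval n a S i).toNat ≤ n)
      = Finset.Icc 1 (NN n a) := by
    apply Finset.filter_true_of_mem
    intro i hi
    rw [Finset.mem_Icc] at hi
    have := tval_le_n' hS hi.1 hi.2
    omega
  rw [this, Nat.card_Icc]
  omega

end TvN

/-! ### weight partial sums and label/cell transfer -/

lemma wt_bsum {n : ℕ} {a : ℕ → ℕ} (T : ℕ × ℕ → ℕ)
    (hpos : ∀ c ∈ keyDiagram n a, 1 ≤ T c) (k : ℕ) :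
    bsum (⇑(wtF n a T)) k = ((keyDiagram n a).filter (fun c => T c ≤ k)).card := by
  unfold bsum
  rw [show (∑ j ∈ Finset.Icc 1 k, (wtF n a T) j)
      = ∑ j ∈ Finset.Icc 1 k, ((keyDiagram n a).filter (fun c => T c = j)).card from
    Finset.sum_congr rfl fun j _ => wtF_apply T j]
  exact sum_card_filter_eq (keyDiagram n a) T k hpos

lemma card_filter_cellOf {n : ℕ} {a : ℕ → ℕ} {S : ℕ × ℕ → ℕ}
    (hS : IsStandardFilling n a S) (p : ℕ × ℕ → Prop) :
    ((Finset.Icc 1 (NN n a)).filter (fun i => p (cellOf n a S i))).card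
      = ((keyDiagram n a).filter (fun c => p c)).card := by
  apply Finset.card_nbij (i := fun i => cellOf n a S i)
  · intro i hi
    rw [Finset.mem_coe, Finset.mem_filter] at hi
    have h1 := Finset.mem_Icc.mp hi.1
    rw [Finset.mem_coe, Finset.mem_filter]
    exact ⟨(cellOf_spec hS h1.1 h1.2).1, hi.2⟩
  · intro i hi j hj hij
    simp only [Finset.coe_filter, Set.mem_setOf_eq, Finset.mem_Icc] at hi hj
    have h1 := (cellOf_spec hS hi.1.1 hi.1.2).2
    have h2 := (cellOf_spec hS hj.1.1 hj.1.2).2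
    rw [← h1, ← h2]
    exact congrArg S hij
  · intro c hc
    simp only [Finset.coe_filter, Set.mem_setOf_eq] at hc
    refine ⟨S c, ?_, ?_⟩
    · simp only [Finset.coe_filter, Set.mem_setOf_eq, Finset.mem_Icc]
      rw [cellOf_S hS hc.1]
      exact ⟨⟨(S_mem_Icc hS hc.1).1, (S_mem_Icc hS hc.1).2⟩, hc.2⟩
    · exact cellOf_S hS hc.1
/-! ### Fillings membership -/

section Fill

variable {n : ℕ} {a : ℕ → ℕ}

lemma mem_Fillings {B : ℕ} {T : (ℕ × ℕ) →₀ ℕ} :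
    T ∈ Fillings n a B ↔ T.support ⊆ keyDiagram n a ∧
      ∀ c ∈ keyDiagram n a, T c ∈ Finset.Icc 1 B :=
  Finset.mem_finsupp_iff

lemma Fillings_zero {B : ℕ} {T : (ℕ × ℕ) →₀ ℕ} (hT : T ∈ Fillings n a B)
    {c : ℕ × ℕ} (hc : c ∉ keyDiagram n a) : T c = 0 := by
  by_contra h
  exact hc ((mem_Fillings.mp hT).1 (Finsupp.mem_support_iff.mpr h))

/-! ### The forward direction -/

variable {T : (ℕ × ℕ) →₀ ℕ}

lemma SSKT_parts (hT : T ∈ SSKTset n a) :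
    T ∈ Fillings n a n ∧ IsKeyTableau n a ⇑T ∧ RowBounded n a ⇑T := by
  unfold SSKTset at hT
  rw [Finset.mem_filter] at hT
  exact ⟨hT.1, hT.2.1, hT.2.2⟩

lemma fwd_colDistinct (hT : T ∈ SSKTset n a) : ColDistinct n a ⇑T :=
  (SSKT_parts hT).2.1.2.1

lemma fwd_stdF_eq (hT : T ∈ SSKTset n a) :
    ∀ c ∈ keyDiagram n a, stdize n a ⇑T c = (stdF n a ⇑T) c := by
  intro c hc
  rw [stdF_apply, if_pos hc]

lemma fwd_hS (hT : T ∈ SSKTset n a) : IsStandardFilling n a ⇑(stdF n a ⇑T) :=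
  isStandardFilling_congr (fwd_stdF_eq hT) (stdize_bijOn (fwd_colDistinct hT))

lemma fwd_S_lt_iff (hT : T ∈ SSKTset n a) {c d : ℕ × ℕ} (hc : c ∈ keyDiagram n a)
    (hd : d ∈ keyDiagram n a) :
    (stdF n a ⇑T) c < (stdF n a ⇑T) d ↔ keyLt (⇑T) c d := by
  rw [← fwd_stdF_eq hT c hc, ← fwd_stdF_eq hT d hd]
  exact stdize_lt_iff (fwd_colDistinct hT) hc hd

lemma fwd_hK (hT : T ∈ SSKTset n a) : IsKeyTableau n a ⇑(stdF n a ⇑T) := by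
  have hKT := (SSKT_parts hT).2.1
  refine ⟨?_, ?_, ?_, ?_⟩
  · intro c hc
    rw [← fwd_stdF_eq hT c hc]
    exact one_le_stdize hc
  · intro c hc d hd hcol hne heq
    rw [← fwd_stdF_eq hT c hc, ← fwd_stdF_eq hT d hd] at heq
    exact absurd (stdize_injOn (fwd_colDistinct hT) hc hd heq) hne
  · intro r c hrc hrc1
    have : keyLt (⇑T) (r, c + 1) (r, c) := by
      have hle := hKT.2.2.1 r c hrc hrc1
      rcases Nat.lt_or_ge (T (r, c + 1)) (T (r, c)) with h | h
      · exact Or.inl h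
      · exact Or.inr ⟨by omega, by simp⟩
    exact le_of_lt ((fwd_S_lt_iff hT hrc1 hrc).mpr this)
  · intro r r' c hrc hr'c hrr' hlt
    rw [fwd_S_lt_iff hT hrc hr'c] at hlt
    have hTlt : T (r, c) < T (r', c) := by
      rcases hlt with h | ⟨h, h2⟩
      · exact h
      · exact absurd h2 (by simp)
    obtain ⟨hmem, hlt2⟩ := hKT.2.2.2 r r' c hrc hr'c hrr' hTlt
    exact ⟨hmem, (fwd_S_lt_iff hT hrc hmem).mpr (Or.inl hlt2)⟩

lemma fwd_v_mono (hT : T ∈ SSKTset n a) :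
    ∀ i, 1 ≤ i → i < NN n a →
      T (cellOf n a (⇑(stdF n a ⇑T)) i) ≤ T (cellOf n a (⇑(stdF n a ⇑T)) (i + 1)) := by
  intro i h1 h2
  have hS : IsStandardFilling n a (⇑(stdF n a ⇑T)) := fwd_hS hT
  have hc := cellOf_spec hS h1 (by omega)
  have hd := cellOf_spec hS (by omega : 1 ≤ i + 1) (by omega)
  have hkey : keyLt (⇑T) (cellOf n a (⇑(stdF n a ⇑T)) i)
      (cellOf n a (⇑(stdF n a ⇑T)) (i + 1)) := by
    rw [← fwd_S_lt_iff hT hc.1 hd.1, hc.2, hd.2]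
    omega
  rcases hkey with h | ⟨h, _⟩
  · exact le_of_lt h
  · exact le_of_eq h

lemma fwd_v_jump (hT : T ∈ SSKTset n a) :
    ∀ i, 1 ≤ i → i < NN n a →
      colOf n a (⇑(stdF n a ⇑T)) i ≤ colOf n a (⇑(stdF n a ⇑T)) (i + 1) →
      T (cellOf n a (⇑(stdF n a ⇑T)) i) < T (cellOf n a (⇑(stdF n a ⇑T)) (i + 1)) := by
  intro i h1 h2 hb
  have hS : IsStandardFilling n a (⇑(stdF n a ⇑T)) := fwd_hS hT
  have hc := cellOf_spec hS h1 (by omega)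
  have hd := cellOf_spec hS (by omega : 1 ≤ i + 1) (by omega)
  have hkey : keyLt (⇑T) (cellOf n a (⇑(stdF n a ⇑T)) i)
      (cellOf n a (⇑(stdF n a ⇑T)) (i + 1)) := by
    rw [← fwd_S_lt_iff hT hc.1 hd.1, hc.2, hd.2]
    omega
  rcases hkey with h | ⟨h, h2'⟩
  · exact h
  · exfalso
    have e1 : colOf n a (⇑(stdF n a ⇑T)) i = (cellOf n a (⇑(stdF n a ⇑T)) i).2 := rfl
    have e2 : colOf n a (⇑(stdF n a ⇑T)) (i + 1)
        = (cellOf n a (⇑(stdF n a ⇑T)) (i + 1)).2 := rfl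
    omega

lemma fwd_v_row (hT : T ∈ SSKTset n a) :
    ∀ i, 1 ≤ i → i ≤ NN n a →
      T (cellOf n a (⇑(stdF n a ⇑T)) i) ≤ rowOf n a (⇑(stdF n a ⇑T)) i := by
  intro i h1 h2
  have hc := cellOf_spec (fwd_hS hT) h1 h2
  exact (SSKT_parts hT).2.2 _ hc.1

lemma fwd_v_pos (hT : T ∈ SSKTset n a) :
    ∀ i, 1 ≤ i → i ≤ NN n a → 1 ≤ T (cellOf n a (⇑(stdF n a ⇑T)) i) := by
  intro i h1 h2
  have hc := cellOf_spec (fwd_hS hT) h1 h2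
  exact (SSKT_parts hT).2.1.1 _ hc.1

lemma fwd_v_le_tval (hT : T ∈ SSKTset n a) :
    ∀ i, 1 ≤ i → i ≤ NN n a →
      (T (cellOf n a (⇑(stdF n a ⇑T)) i) : ℤ) ≤ tval n a (⇑(stdF n a ⇑T)) i := by
  have hS := fwd_hS hT
  intro i h1 h2
  refine le_tval_of hS (fwd_v_jump hT) (fwd_v_mono hT) (fwd_v_row hT) ?_
    (NN n a - i) i h1 h2 rfl
  intro j hj1 hj2
  have h3 := fwd_v_row hT j hj1 hj2
  have hr := (rowOf_colOf_bounds hS hj1 hj2).2.1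
  omega

lemma fwd_nonvirtual (hT : T ∈ SSKTset n a) :
    ∀ i ∈ Finset.Icc 1 (NN n a), 1 ≤ tval n a (⇑(stdF n a ⇑T)) i := by
  intro i hi
  rw [Finset.mem_Icc] at hi
  have h1 := fwd_v_le_tval hT i hi.1 hi.2
  have h2 := fwd_v_pos hT i hi.1 hi.2
  omega

lemma fwd_wt_bsum_eq (hT : T ∈ SSKTset n a) (k : ℕ) :
    bsum (⇑(wtF n a ⇑T)) k =
      ((Finset.Icc 1 (NN n a)).filter
        (fun i => T (cellOf n a (⇑(stdF n a ⇑T)) i) ≤ k)).card := by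
  rw [wt_bsum (⇑T) (fun c hc => (SSKT_parts hT).2.1.1 c hc) k]
  convert (card_filter_cellOf (fwd_hS hT) (fun c => T c ≤ k)).symm using 3

lemma fwd_wt_bsum_n (hT : T ∈ SSKTset n a) : bsum (⇑(wtF n a ⇑T)) n = NN n a := by
  rw [wt_bsum (⇑T) (fun c hc => (SSKT_parts hT).2.1.1 c hc) n]
  have : (keyDiagram n a).filter (fun c => T c ≤ n) = keyDiagram n a := by
    apply Finset.filter_true_of_mem
    intro c hc
    have := (mem_Fillings.mp (SSKT_parts hT).1).2 c hc
    rw [Finset.mem_Icc] at this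
    exact this.2
  rw [this, card_keyDiagram]

lemma fwd_dominates (hT : T ∈ SSKTset n a) :
    Dominates n (⇑(wtF n a ⇑T)) (desComp n a (⇑(stdF n a ⇑T))) := by
  intro k hk1 hkn
  have h1 : bsum (desComp n a (⇑(stdF n a ⇑T))) k ≤ bsum (⇑(wtF n a ⇑T)) k := by
    rw [desComp_bsum (fwd_hS hT) (fwd_nonvirtual hT), fwd_wt_bsum_eq hT k]
    apply Finset.card_le_card
    intro i hi
    rw [Finset.mem_filter, Finset.mem_Icc] at hi
    rw [Finset.mem_filter, Finset.mem_Icc]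
    refine ⟨hi.1, ?_⟩
    have := fwd_v_le_tval hT i hi.1.1 hi.1.2
    have h2 := hi.2
    omega
  exact h1

lemma fwd_count_v (hT : T ∈ SSKTset n a) {i : ℕ} (h1 : 1 ≤ i) (h2 : i < NN n a)
    (hjumped : T (cellOf n a (⇑(stdF n a ⇑T)) i) <
      T (cellOf n a (⇑(stdF n a ⇑T)) (i + 1))) :
    bsum (⇑(wtF n a ⇑T)) (T (cellOf n a (⇑(stdF n a ⇑T)) i)) = i := by
  have hvmono : ∀ p q, 1 ≤ p → p ≤ q → q ≤ NN n a →
      T (cellOf n a (⇑(stdF n a ⇑T)) p) ≤ T (cellOf n a (⇑(stdF n a ⇑T)) q) :=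
    w_mono_of (n := n) (a := a) (fwd_v_mono hT)
  rw [fwd_wt_bsum_eq hT]
  have heq : (Finset.Icc 1 (NN n a)).filter
      (fun j => T (cellOf n a (⇑(stdF n a ⇑T)) j) ≤ T (cellOf n a (⇑(stdF n a ⇑T)) i))
      = Finset.Icc 1 i := by
    ext j
    rw [Finset.mem_filter, Finset.mem_Icc, Finset.mem_Icc]
    constructor
    · rintro ⟨⟨hj1, hj2⟩, hle⟩
      refine ⟨hj1, ?_⟩
      by_contra hgt
      push_neg at hgt
      have := hvmono (i + 1) j (by omega) (by omega) (by omega)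
      omega
    · rintro ⟨hj1, hj2⟩
      exact ⟨⟨hj1, by omega⟩, hvmono j i hj1 hj2 (by omega)⟩
  rw [heq, Nat.card_Icc]
  omega

lemma fwd_refines (hT : T ∈ SSKTset n a) :
    Refines (flat n (⇑(wtF n a ⇑T))) (flat n (desComp n a (⇑(stdF n a ⇑T)))) := by
  have hS := fwd_hS hT
  have hv := fwd_nonvirtual hT
  apply refines_flat_of_bsum
  · have h1 : bsum (desComp n a (⇑(stdF n a ⇑T))) n
        = NN n (desComp n a (⇑(stdF n a ⇑T))) := rfl
    rw [h1, NN_desComp hS hv, fwd_wt_bsum_n hT]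
  · intro k hk
    rw [desComp_bsum hS hv]
    have hCkN : ((Finset.Icc 1 (NN n a)).filter
        (fun i => (tval n a (⇑(stdF n a ⇑T)) i).toNat ≤ k)).card ≤ NN n a := by
      calc ((Finset.Icc 1 (NN n a)).filter
            (fun i => (tval n a (⇑(stdF n a ⇑T)) i).toNat ≤ k)).card
          ≤ (Finset.Icc 1 (NN n a)).card := Finset.card_le_card (Finset.filter_subset _ _)
        _ = NN n a := by rw [Nat.card_Icc]; omega
    set Ck := ((Finset.Icc 1 (NN n a)).filter
        (fun i => (tval n a (⇑(stdF n a ⇑T)) i).toNat ≤ k)).card with hCk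
    rcases Nat.eq_zero_or_pos Ck with h0 | hpos
    · exact ⟨0, by omega, by rw [h0, bsum_zero]⟩
    rcases Nat.lt_or_ge Ck (NN n a) with hlt | hge
    · -- the jump case
      have htvi : (tval n a (⇑(stdF n a ⇑T)) Ck).toNat ≤ k :=
        count_le _ (tvN_mono hv) hpos hCkN (le_refl _)
      have htvi1 : ¬ (tval n a (⇑(stdF n a ⇑T)) (Ck + 1)).toNat ≤ k := by
        intro hcon
        have := le_card_count _ (tvN_mono hv) (by omega : 1 ≤ Ck + 1) (by omega) hcon
        omega
      have hbreak : colOf n a (⇑(stdF n a ⇑T)) Ck ≤ colOf n a (⇑(stdF n a ⇑T)) (Ck + 1) := by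
        by_contra hnb
        have heq := tval_nobreak (⇑(stdF n a ⇑T)) hpos hlt hnb
        rw [heq] at htvi
        exact htvi1 htvi
      have hjumped := fwd_v_jump hT Ck hpos hlt hbreak
      refine ⟨T (cellOf n a (⇑(stdF n a ⇑T)) Ck), ?_, ?_⟩
      · have h3 := fwd_v_row hT Ck hpos (by omega)
        have hr := (rowOf_colOf_bounds hS hpos (by omega : Ck ≤ NN n a)).2.1
        omega
      · exact (fwd_count_v hT hpos hlt hjumped).symm
    · have hCkeq : Ck = NN n a := by omega
      exact ⟨n, le_refl _, by rw [hCkeq, fwd_wt_bsum_n hT]⟩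

lemma fwd_stdF_mem_SKT (hT : T ∈ SSKTset n a) : stdF n a ⇑T ∈ SKTset n a := by
  unfold SKTset
  rw [Finset.mem_filter]
  refine ⟨?_, fwd_hS hT, fwd_hK hT⟩
  rw [mem_Fillings]
  constructor
  · intro c hc
    rw [Finsupp.mem_support_iff] at hc
    by_contra hnot
    rw [stdF_apply, if_neg hnot] at hc
    exact hc rfl
  · intro c hc
    rw [stdF_apply, if_pos hc, Finset.mem_Icc]
    exact ⟨one_le_stdize hc, stdize_le_NN c⟩

lemma fwd_wt_mem_antidiag (hT : T ∈ SSKTset n a) :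
    wtF n a ⇑T ∈ (Finset.Icc 1 n).finsuppAntidiag
      (NN n (desComp n a (⇑(stdF n a ⇑T)))) := by
  rw [Finset.mem_finsuppAntidiag]
  constructor
  · rw [NN_desComp (fwd_hS hT) (fwd_nonvirtual hT)]
    exact fwd_wt_bsum_n hT
  · intro j hj
    rw [Finsupp.mem_support_iff, wtF_apply] at hj
    obtain ⟨c, hc⟩ := Finset.card_pos.mp (Nat.pos_of_ne_zero hj)
    rw [Finset.mem_filter] at hc
    have := (mem_Fillings.mp (SSKT_parts hT).1).2 c hc.1
    rw [Finset.mem_Icc] at this ⊢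
    omega

/-- left inverse : destandardizing the standardization recovers `T`. -/
lemma fwd_left_inv (hT : T ∈ SSKTset n a) :
    destdF n a (⇑(wtF n a ⇑T)) (⇑(stdF n a ⇑T)) = T := by
  ext c
  rw [destdF_apply]
  by_cases hc : c ∈ keyDiagram n a
  · rw [if_pos hc]
    have hP := SSKT_parts hT
    have hTc1 : 1 ≤ T c := hP.2.1.1 c hc
    have hupper : (stdF n a ⇑T) c ≤ bsum (⇑(wtF n a ⇑T)) (T c) := by
      rw [wt_bsum (⇑T) (fun d hd => hP.2.1.1 d hd)]
      rw [← fwd_stdF_eq hT c hc, stdize_eq_card_Aset]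
      apply Finset.card_le_card
      intro d hd
      unfold Aset at hd
      rw [Finset.mem_filter] at hd ⊢
      refine ⟨hd.1, ?_⟩
      rcases hd.2 with h | ⟨h, _⟩ <;> omega
    have hlower : bsum (⇑(wtF n a ⇑T)) (T c - 1) < (stdF n a ⇑T) c := by
      rw [wt_bsum (⇑T) (fun d hd => hP.2.1.1 d hd)]
      rw [← fwd_stdF_eq hT c hc, stdize_eq_card_Aset]
      apply Finset.card_lt_card
      constructor
      · intro d hd
        rw [Finset.mem_filter] at hd
        unfold Aset
        rw [Finset.mem_filter]
        exact ⟨hd.1, Or.inl (by omega)⟩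
      · intro hsub
        have hcmem : c ∈ Aset n a (⇑T) c := by
          unfold Aset
          rw [Finset.mem_filter]
          exact ⟨hc, Or.inr ⟨rfl, le_refl _⟩⟩
        have := hsub hcmem
        rw [Finset.mem_filter] at this
        omega
    apply le_antisymm
    · exact Nat.sInf_le hupper
    · by_contra hgt
      push_neg at hgt
      have hle : muOf (⇑(wtF n a ⇑T)) ((stdF n a ⇑T) c) ≤ T c - 1 := by omega
      have hnonempty : (stdF n a ⇑T) c ≤ bsum (⇑(wtF n a ⇑T)) n := by
        rw [fwd_wt_bsum_n hT]
        exact (S_mem_Icc (fwd_hS hT) hc).2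
      have := le_trans (le_bsum_muOf hnonempty) (bsum_mono _ hle)
      omega
  · rw [if_neg hc]
    exact (Fillings_zero (SSKT_parts hT).1 hc).symm

end Fill
/-! ### The backward direction -/

section Back

variable {n : ℕ} {a : ℕ → ℕ} {Sfin : (ℕ × ℕ) →₀ ℕ} {b : ℕ →₀ ℕ}

lemma SKT_parts (h : Sfin ∈ SKTset n a) :
    Sfin ∈ Fillings n a (NN n a) ∧ IsStandardFilling n a ⇑Sfin ∧
      IsKeyTableau n a ⇑Sfin := by
  unfold SKTset at h
  rw [Finset.mem_filter] at h
  exact ⟨h.1, h.2.1, h.2.2⟩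

variable (hS : IsStandardFilling n a ⇑Sfin)
  (hv : ∀ i ∈ Finset.Icc 1 (NN n a), 1 ≤ tval n a ⇑Sfin i)
  (hbN : bsum ⇑b n = NN n a)
  (hdom : Dominates n ⇑b (desComp n a ⇑Sfin))
  (href : Refines (flat n ⇑b) (flat n (desComp n a ⇑Sfin)))

include hS hv hdom in
lemma bk_mu_le_tvN : ∀ i, 1 ≤ i → i ≤ NN n a →
    muOf ⇑b i ≤ (tval n a ⇑Sfin i).toNat := by
  intro i h1 h2
  set k := (tval n a ⇑Sfin i).toNat with hk
  have hk1 : 1 ≤ k := by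
    have := hv i (Finset.mem_Icc.mpr ⟨h1, h2⟩)
    omega
  have hkn : k ≤ n := by
    have := tval_le_n' hS h1 h2
    omega
  have hcount : i ≤ ((Finset.Icc 1 (NN n a)).filter
      (fun j => (tval n a ⇑Sfin j).toNat ≤ k)).card :=
    le_card_count _ (tvN_mono hv) h1 h2 (le_refl _)
  have hle : i ≤ bsum ⇑b k := by
    have hd : bsum (desComp n a ⇑Sfin) k ≤ bsum ⇑b k := hdom k hk1 hkn
    rw [desComp_bsum hS hv] at hd
    omega
  exact Nat.sInf_le hle

include hS hv hdom in
lemma bk_mu_col1 : ∀ i, 1 ≤ i → i ≤ NN n a → colOf n a (⇑Sfin) i = 1 →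
    muOf ⇑b i ≤ rowOf n a (⇑Sfin) i := by
  intro i h1 h2 hcol
  have h3 := bk_mu_le_tvN hS hv hdom i h1 h2
  have h4 := tval_col1_le_row hS h1 h2 hcol
  omega

include hbN in
lemma bk_mu_mono : ∀ i, 1 ≤ i → i < NN n a → muOf ⇑b i ≤ muOf ⇑b (i + 1) := by
  intro i h1 h2
  exact muOf_mono (n := n) (by omega) (by omega)

include hS hv hbN href in
lemma bk_mu_jump : ∀ i, 1 ≤ i → i < NN n a →
    colOf n a (⇑Sfin) i ≤ colOf n a (⇑Sfin) (i + 1) →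
    muOf ⇑b i < muOf ⇑b (i + 1) := by
  intro i h1 h2 hb
  set k := (tval n a ⇑Sfin i).toNat with hk
  have hk1 : 1 ≤ k := by
    have := hv i (Finset.mem_Icc.mpr ⟨h1, by omega⟩)
    omega
  have hkn : k ≤ n := by
    have := tval_le_n' hS h1 (by omega)
    omega
  have hjump : ¬ (tval n a ⇑Sfin (i + 1)).toNat ≤ k := by
    have h3 := tval_break (⇑Sfin) h1 h2 hb
    have h4 := hv (i + 1) (Finset.mem_Icc.mpr ⟨by omega, by omega⟩)
    omega
  have hDk : bsum (desComp n a ⇑Sfin) k = i := by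
    rw [desComp_bsum hS hv]
    have : (Finset.Icc 1 (NN n a)).filter (fun j => (tval n a ⇑Sfin j).toNat ≤ k)
        = Finset.Icc 1 i := by
      ext j
      rw [Finset.mem_filter, Finset.mem_Icc, Finset.mem_Icc]
      constructor
      · rintro ⟨⟨hj1, hj2⟩, hle⟩
        refine ⟨hj1, ?_⟩
        by_contra hgt
        push_neg at hgt
        have := tvN_mono hv (i := i + 1) (j := j) (by omega) (by omega) (by omega)
        omega
      · rintro ⟨hj1, hj2⟩
        exact ⟨⟨hj1, by omega⟩, tvN_mono hv hj1 hj2 (by omega)⟩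
    rw [this, Nat.card_Icc]
    omega
  obtain ⟨m, hmn, hmeq⟩ := bsum_of_refines_flat href k hkn
  rw [hDk] at hmeq
  have hmu1 : muOf ⇑b i ≤ m := Nat.sInf_le (le_of_eq hmeq)
  have hmu2 : ¬ muOf ⇑b (i + 1) ≤ m := by
    intro hcon
    have hne : (i + 1 : ℕ) ≤ bsum ⇑b n := by omega
    have := le_trans (le_bsum_muOf hne) (bsum_mono _ hcon)
    omega
  omega

variable (hK : IsKeyTableau n a ⇑Sfin) (hsupp : b.support ⊆ Finset.Icc 1 n)
  (hSfill : Sfin ∈ Fillings n a (NN n a))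

include hS hv hbN hdom href hK in
lemma bk_Tb_mem_SSKT : destdF n a ⇑b ⇑Sfin ∈ SSKTset n a := by
  have hNb : ∀ i, 1 ≤ i → i ≤ NN n a → i ≤ bsum ⇑b n := by intro i h1 h2; omega
  have hw1 : ∀ i, 1 ≤ i → i ≤ NN n a → 1 ≤ muOf ⇑b i := by
    intro i h1 h2
    exact one_le_muOf (hNb i h1 h2) h1
  have hwn : ∀ i, 1 ≤ i → i ≤ NN n a → muOf ⇑b i ≤ n := by
    intro i h1 h2
    exact muOf_le_n (hNb i h1 h2)
  have heq : ∀ c ∈ keyDiagram n a,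
      (fun c => muOf ⇑b (Sfin c)) c = (destdF n a ⇑b ⇑Sfin) c := by
    intro c hc
    rw [destdF_apply, if_pos hc]
  have hKT := destd_isKeyTableau hS hK (bk_mu_jump hS hv hbN href)
    (bk_mu_mono hbN) hw1
  unfold SSKTset
  rw [Finset.mem_filter]
  refine ⟨?_, isKeyTableau_congr heq hKT, ?_⟩
  · rw [mem_Fillings]
    constructor
    · intro c hc
      rw [Finsupp.mem_support_iff] at hc
      by_contra hnot
      rw [destdF_apply, if_neg hnot] at hc
      exact hc rfl
    · intro c hc
      rw [destdF_apply, if_pos hc, Finset.mem_Icc]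
      have h1 := S_mem_Icc hS hc
      exact ⟨hw1 _ h1.1 h1.2, hwn _ h1.1 h1.2⟩
  · apply rowBounded_congr heq
    apply destd_rowBounded hS (bk_mu_col1 hS hv hdom)
    exact hKT.2.2.1

include hS hv hbN href hSfill in
lemma bk_stdF : stdF n a (⇑(destdF n a ⇑b ⇑Sfin)) = Sfin := by
  have heq : ∀ c ∈ keyDiagram n a,
      (destdF n a ⇑b ⇑Sfin) c = (fun c => muOf ⇑b (Sfin c)) c := by
    intro c hc
    rw [destdF_apply, if_pos hc]
  ext c
  rw [stdF_apply]
  by_cases hc : c ∈ keyDiagram n a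
  · rw [if_pos hc, stdize_congr heq hc]
    exact destd_stdize hS (bk_mu_jump hS hv hbN href) (bk_mu_mono hbN) hc
  · rw [if_neg hc]
    exact (Fillings_zero hSfill hc).symm

include hS hbN hsupp in
lemma bk_wtF : wtF n a (⇑(destdF n a ⇑b ⇑Sfin)) = b := by
  have hNb : ∀ i, 1 ≤ i → i ≤ NN n a → i ≤ bsum ⇑b n := by intro i h1 h2; omega
  have heq : ∀ c ∈ keyDiagram n a,
      (destdF n a ⇑b ⇑Sfin) c = muOf ⇑b (Sfin c) := by
    intro c hc
    rw [destdF_apply, if_pos hc]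
  ext m
  rw [wtF_apply]
  have hcard : ((keyDiagram n a).filter (fun c => (destdF n a ⇑b ⇑Sfin) c = m)).card
      = ((Finset.Icc 1 (NN n a)).filter (fun i => muOf ⇑b i = m)).card := by
    rw [show ((keyDiagram n a).filter (fun c => (destdF n a ⇑b ⇑Sfin) c = m))
        = ((keyDiagram n a).filter (fun c => muOf ⇑b (Sfin c) = m)) from
      Finset.filter_congr (fun c hc => by rw [heq c hc])]
    have h2 : ((Finset.Icc 1 (NN n a)).filter
          (fun i => muOf ⇑b (Sfin (cellOf n a (⇑Sfin) i)) = m)).card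
        = ((keyDiagram n a).filter (fun c => muOf ⇑b (Sfin c) = m)).card := by
      convert card_filter_cellOf hS (fun c => muOf ⇑b (Sfin c) = m) using 3
    rw [← h2]
    congr 1
    apply Finset.filter_congr
    intro i hi
    rw [Finset.mem_Icc] at hi
    rw [(cellOf_spec hS hi.1 hi.2).2]
  rw [hcard]
  rcases Nat.lt_or_ge m 1 with hm | hm1
  · -- m = 0
    have h0 : m = 0 := by omega
    subst h0
    have : (Finset.Icc 1 (NN n a)).filter (fun i => muOf ⇑b i = 0) = ∅ := by
      apply Finset.filter_false_of_mem
      intro i hi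
      rw [Finset.mem_Icc] at hi
      have := one_le_muOf (hNb i hi.1 hi.2) hi.1
      omega
    rw [this]
    simp only [Finset.card_empty]
    by_contra hb0
    have : (0 : ℕ) ∈ b.support := Finsupp.mem_support_iff.mpr (fun h => hb0 h.symm)
    have := hsupp this
    rw [Finset.mem_Icc] at this
    omega
  by_cases hmn : m ≤ n
  · -- 1 ≤ m ≤ n
    have hsub : (Finset.Icc 1 (NN n a)).filter (fun i => muOf ⇑b i ≤ m - 1)
        ⊆ (Finset.Icc 1 (NN n a)).filter (fun i => muOf ⇑b i ≤ m) := by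
      intro i hi
      rw [Finset.mem_filter] at hi ⊢
      exact ⟨hi.1, by omega⟩
    have heq2 : (Finset.Icc 1 (NN n a)).filter (fun i => muOf ⇑b i = m)
        = ((Finset.Icc 1 (NN n a)).filter (fun i => muOf ⇑b i ≤ m)) \
          ((Finset.Icc 1 (NN n a)).filter (fun i => muOf ⇑b i ≤ m - 1)) := by
      ext i
      rw [Finset.mem_sdiff, Finset.mem_filter, Finset.mem_filter, Finset.mem_filter]
      constructor
      · rintro ⟨hi, hmu⟩
        exact ⟨⟨hi, by omega⟩, fun hcon => by omega⟩
      · rintro ⟨⟨hi, hle⟩, hnot⟩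
        refine ⟨hi, ?_⟩
        by_contra hne
        exact hnot ⟨hi, by omega⟩
    rw [heq2, Finset.card_sdiff_of_subset hsub,
      muOf_count (NN n a) hbN hmn, muOf_count (NN n a) hbN (by omega : m - 1 ≤ n)]
    have hsucc := bsum_succ (⇑b) (m - 1)
    have hm1eq : m - 1 + 1 = m := by omega
    rw [hm1eq] at hsucc
    omega
  · -- m > n
    push_neg at hmn
    have : (Finset.Icc 1 (NN n a)).filter (fun i => muOf ⇑b i = m) = ∅ := by
      apply Finset.filter_false_of_mem
      intro i hi
      rw [Finset.mem_Icc] at hi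
      have := muOf_le_n (hNb i hi.1 hi.2)
      omega
    rw [this]
    simp only [Finset.card_empty]
    by_contra hb0
    have : m ∈ b.support := Finsupp.mem_support_iff.mpr (fun h => hb0 h.symm)
    have := hsupp this
    rw [Finset.mem_Icc] at this
    omega

end Back
/-! ### Assembly -/

/-- The set of admissible weights attached to a standard key tableau. -/
def BBset (n : ℕ) (a : ℕ → ℕ) (Sfin : (ℕ × ℕ) →₀ ℕ) : Finset (ℕ →₀ ℕ) :=
  if ∀ i ∈ Finset.Icc 1 (NN n a), 1 ≤ tval n a ⇑Sfin i then
    ((Finset.Icc 1 n).finsuppAntidiag (NN n (desComp n a ⇑Sfin))).filter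
      (fun b : ℕ →₀ ℕ => Dominates n ⇑b (desComp n a ⇑Sfin) ∧
        Refines (flat n ⇑b) (flat n (desComp n a ⇑Sfin)))
  else ∅

lemma SlideOpt_eq_BB (n : ℕ) (a : ℕ → ℕ) (Sfin : (ℕ × ℕ) →₀ ℕ) :
    SlideOpt n (desOpt n a ⇑Sfin)
      = ∑ b ∈ BBset n a Sfin, MvPolynomial.monomial b (1 : Polynomial ℤ) := by
  rw [desOpt_eq]
  unfold BBset
  by_cases hcond : ∀ i ∈ Finset.Icc 1 (NN n a), 1 ≤ tval n a ⇑Sfin i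
  · rw [if_pos hcond, if_pos hcond]
    rfl
  · rw [if_neg hcond, if_neg hcond]
    simp [SlideOpt]

lemma BB_elim {n : ℕ} {a : ℕ → ℕ} {Sfin : (ℕ × ℕ) →₀ ℕ} {b : ℕ →₀ ℕ}
    (hSm : Sfin ∈ SKTset n a) (hb : b ∈ BBset n a Sfin) :
    (∀ i ∈ Finset.Icc 1 (NN n a), 1 ≤ tval n a ⇑Sfin i) ∧
    bsum ⇑b n = NN n a ∧ b.support ⊆ Finset.Icc 1 n ∧
    Dominates n ⇑b (desComp n a ⇑Sfin) ∧
    Refines (flat n ⇑b) (flat n (desComp n a ⇑Sfin)) := by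
  unfold BBset at hb
  by_cases hcond : ∀ i ∈ Finset.Icc 1 (NN n a), 1 ≤ tval n a ⇑Sfin i
  · rw [if_pos hcond, Finset.mem_filter, Finset.mem_finsuppAntidiag] at hb
    refine ⟨hcond, ?_, hb.1.2, hb.2.1, hb.2.2⟩
    have h1 : bsum ⇑b n = NN n (desComp n a ⇑Sfin) := hb.1.1
    rw [h1, NN_desComp (SKT_parts hSm).2.1 hcond]
  · rw [if_neg hcond] at hb
    exact absurd hb (Finset.notMem_empty b)
end
end NSMac
/-- For every weak composition `a` of length `n`,
`κ_a = Σ_{T ∈ SKT(a)} 𝔉_{des T} = Σ_{T ∈ SSKT(a)} x^{wt T}`. -/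
theorem NSMac.key_polynomial_eq_sskt_generating_function (n : ℕ) (a : ℕ → ℕ) :
    kappa n a =
      ∑ T ∈ SSKTset n a, MvPolynomial.monomial (wtF n a ⇑T) (1 : Polynomial ℤ) := by
  classical
  have step1 : kappa n a = ∑ p ∈ (NSMac.SKTset n a).sigma (fun Sf => NSMac.BBset n a Sf),
      MvPolynomial.monomial p.2 (1 : Polynomial ℤ) := by
    unfold NSMac.kappa
    rw [Finset.sum_sigma]
    exact Finset.sum_congr rfl fun Sf _ => NSMac.SlideOpt_eq_BB n a Sf
  rw [step1]
  refine Finset.sum_nbij' (fun p => NSMac.destdF n a ⇑p.2 ⇑p.1)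
    (fun T => ⟨NSMac.stdF n a ⇑T, NSMac.wtF n a ⇑T⟩) ?_ ?_ ?_ ?_ ?_
  · -- maps into SSKT
    intro p hp
    rw [Finset.mem_sigma] at hp
    obtain ⟨hSfill, hS, hK⟩ := NSMac.SKT_parts hp.1
    obtain ⟨hv, hbN, hsupp, hdom, href⟩ := NSMac.BB_elim hp.1 hp.2
    exact NSMac.bk_Tb_mem_SSKT hS hv hbN hdom href hK
  · -- maps into sigma
    intro T hT
    rw [Finset.mem_sigma]
    refine ⟨NSMac.fwd_stdF_mem_SKT hT, ?_⟩
    unfold NSMac.BBset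
    rw [if_pos (NSMac.fwd_nonvirtual hT), Finset.mem_filter]
    exact ⟨NSMac.fwd_wt_mem_antidiag hT, NSMac.fwd_dominates hT, NSMac.fwd_refines hT⟩
  · -- left inverse
    intro p hp
    rw [Finset.mem_sigma] at hp
    obtain ⟨Sf, bb⟩ := p
    obtain ⟨hSfill, hS, hK⟩ := NSMac.SKT_parts hp.1
    obtain ⟨hv, hbN, hsupp, hdom, href⟩ := NSMac.BB_elim hp.1 hp.2
    have h1 : NSMac.stdF n a ⇑(NSMac.destdF n a ⇑bb ⇑Sf) = Sf :=
      NSMac.bk_stdF hS hv hbN href hSfill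
    have h2 : NSMac.wtF n a ⇑(NSMac.destdF n a ⇑bb ⇑Sf) = bb :=
      NSMac.bk_wtF hS hbN hsupp
    show (⟨NSMac.stdF n a ⇑(NSMac.destdF n a ⇑bb ⇑Sf),
        NSMac.wtF n a ⇑(NSMac.destdF n a ⇑bb ⇑Sf)⟩ :
      Σ _ : (ℕ × ℕ) →₀ ℕ, ℕ →₀ ℕ) = ⟨Sf, bb⟩
    rw [h1, h2]
  · -- right inverse
    intro T hT
    exact NSMac.fwd_left_inv hT
  · -- summand equality
    intro p hp
    rw [Finset.mem_sigma] at hp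
    obtain ⟨hSfill, hS, hK⟩ := NSMac.SKT_parts hp.1
    obtain ⟨hv, hbN, hsupp, hdom, href⟩ := NSMac.BB_elim hp.1 hp.2
    rw [NSMac.bk_wtF hS hbN hsupp]
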